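/- arXiv:1709.02168 — 2 statements merged into one kernel-verified Lean document; each statement's English description precedes it below -/
import Mathlib

section
/- Non-asymptotic information-spectrum converse: suppose (1/n) log|ℳ_n| ≤ R and P(Ã) > 0. Then |P_{X^nY^n} − π_{X^nY^n}| ≥ 1 − P( 𝒜₁ ∩ 𝒜₂ ∩ 𝒜₃ | Ã ) − 3 e^{−nη}, where P(·|Ã) denotes the law of (X^n,Y^n,M_n) ∼ P_{M_nX^nY^n} conditioned on the event (X^n,Y^n,M_n) ∈ Ã. -/
open Filter

noncomputable section

/-- `P` is a probability mass function on the finite type `α`. -/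
def IsPMF {α : Type*} [Fintype α] (P : α → ℝ) : Prop :=
  (∀ a, 0 ≤ P a) ∧ (∑ a, P a) = 1

/-- Rényi divergence of order `1 + s` (natural logarithm), `EReal`-valued.
For `s ≥ 0` it is `⊤` when `supp P ⊄ supp Q`; for `s = 0` it is the relative
entropy; otherwise it is `(1/s) log ∑_{x ∈ supp P} P(x)^{1+s} Q(x)^{-s}`. -/
def renyiDiv {α : Type*} [Fintype α] (s : ℝ) (P Q : α → ℝ) : EReal :=
  if 0 ≤ s ∧ ∃ a, 0 < P a ∧ Q a = 0 then ⊤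
  else if s = 0 then
    (((∑ a ∈ Finset.univ.filter (fun a => 0 < P a), P a * Real.log (P a / Q a)) : ℝ) : EReal)
  else
    ((((1 / s) * Real.log (∑ a ∈ Finset.univ.filter (fun a => 0 < P a),
        P a ^ (1 + s) * Q a ^ (-s))) : ℝ) : EReal)

/-- Mutual information `I(XY; W)` of a joint distribution on `(X × Y) × W`. -/
def mutualInfoW {X Y W : Type*} [Fintype X] [Fintype Y] [Fintype W] (P : X × Y × W → ℝ) : ℝ :=
  ∑ z ∈ Finset.univ.filter (fun z : X × Y × W => 0 < P z),
    P z * Real.log (P z /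
      ((∑ w, P (z.1, z.2.1, w)) * (∑ p : X × Y, P (p.1, p.2, z.2.2))))

/-- The Markov chain condition `X − W − Y`. -/
def IsMarkovXWY {X Y W : Type*} [Fintype X] [Fintype Y] [Fintype W] (P : X × Y × W → ℝ) : Prop :=
  ∀ x y w, P (x, y, w) * (∑ p : X × Y, P (p.1, p.2, w)) =
    (∑ y', P (x, y', w)) * (∑ x', P (x', y, w))

/-- Wyner's common information of the target distribution `π` on `X × Y`. -/
def CWyner {X Y : Type*} [Fintype X] [Fintype Y] (π : X × Y → ℝ) : ℝ :=
  sInf { r | ∃ P : X × Y × Fin (Fintype.card X * Fintype.card Y) → ℝ,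
    IsPMF P ∧ (∀ x y, (∑ w, P (x, y, w)) = π (x, y)) ∧ IsMarkovXWY P ∧ r = mutualInfoW P }

/-- The message set size `⌈e^{nR}⌉` of a rate-`R` synthesis code at blocklength `n`. -/
def numMsgs (R : ℝ) (n : ℕ) : ℕ := ⌈Real.exp (n * R)⌉₊

/-- A synthesis code: a pair of conditional distributions from the message set to
`X^n` and `Y^n` respectively. -/
structure SynthCode (X Y : Type*) [Fintype X] [Fintype Y] (M n : ℕ) where
  PX : Fin M → (Fin n → X) → ℝ
  PY : Fin M → (Fin n → Y) → ℝ
  PX_pmf : ∀ m, IsPMF (PX m)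
  PY_pmf : ∀ m, IsPMF (PY m)

/-- The distribution `P_{X^n Y^n}` induced by a synthesis code. -/
def SynthCode.induced {X Y : Type*} [Fintype X] [Fintype Y] {M n : ℕ}
    (c : SynthCode X Y M n) : (Fin n → X) × (Fin n → Y) → ℝ :=
  fun z => (M : ℝ)⁻¹ * ∑ m, c.PX m z.1 * c.PY m z.2

/-- The `n`-fold product distribution `π^{⊗ n}` on `X^n × Y^n`. -/
def prodDist {X Y : Type*} [Fintype X] [Fintype Y] (π : X × Y → ℝ) (n : ℕ) :
    (Fin n → X) × (Fin n → Y) → ℝ :=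
  fun z => ∏ i, π (z.1 i, z.2 i)

/-- Total variation distance between two distributions on a finite type. -/
def tvDist {α : Type*} [Fintype α] (P Q : α → ℝ) : ℝ :=
  (∑ a, |P a - Q a|) / 2

/-- The probability that `P` assigns to the set `S`. -/
def prSet {γ : Type*} [Fintype γ] (P : γ → ℝ) (S : Set γ) : ℝ :=
  ∑ z, S.indicator P z

/-- The joint distribution `P_{M_n X^n Y^n}` induced by a synthesis code. -/
def SynthCode.joint {X Y : Type*} [Fintype X] [Fintype Y] {M n : ℕ}
    (c : SynthCode X Y M n) : Fin M × (Fin n → X) × (Fin n → Y) → ℝ :=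
  fun t => (M : ℝ)⁻¹ * (c.PX t.1 t.2.1 * c.PY t.1 t.2.2)

section Helpers

variable {α : Type*} [Fintype α]

lemma prSet_nonneg' {P : α → ℝ} (hP : ∀ a, 0 ≤ P a) (S : Set α) : 0 ≤ prSet P S :=
  Finset.sum_nonneg fun a _ => Set.indicator_nonneg (fun a _ => hP a) a

lemma prSet_le_total' {P : α → ℝ} (hP : ∀ a, 0 ≤ P a) (S : Set α) :
    prSet P S ≤ ∑ a, P a :=
  Finset.sum_le_sum fun a _ => Set.indicator_le_self' (fun a _ => hP a) a

lemma prSet_add_compl' (P : α → ℝ) (S : Set α) :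
    prSet P S + prSet P Sᶜ = ∑ a, P a := by
  classical
  rw [prSet, prSet, ← Finset.sum_add_distrib]
  refine Finset.sum_congr rfl fun a _ => ?_
  by_cases h : a ∈ S <;> simp [Set.indicator_apply, h]

lemma prSet_le_add_of_cover' {P : α → ℝ} (hP : ∀ a, 0 ≤ P a) {U S T : Set α}
    (h : ∀ a, a ∈ U → P a ≠ 0 → a ∈ S ∨ a ∈ T) :
    prSet P U ≤ prSet P S + prSet P T := by
  classical
  rw [prSet, prSet, prSet, ← Finset.sum_add_distrib]
  refine Finset.sum_le_sum fun a _ => ?_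
  simp only [Set.indicator_apply]
  by_cases hU : a ∈ U
  · by_cases hz : P a = 0
    · split_ifs <;> simp [hz]
    · have hST := h a hU hz
      simp only [if_pos hU]
      split_ifs with h1 h2 <;> try linarith [hP a]
      tauto
  · simp only [if_neg hU]
    split_ifs <;> linarith [hP a]

lemma prSet_le_of_pointwise' {P : α → ℝ} {S : Set α} (g : α → ℝ) (hg : ∀ a, 0 ≤ g a)
    (h : ∀ a ∈ S, P a ≤ g a) : prSet P S ≤ ∑ a, g a := by
  classical
  refine Finset.sum_le_sum fun a _ => ?_
  by_cases hS : a ∈ S <;> simp [Set.indicator_apply, hS, h a, hg a]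

lemma prSet_sub_le_tv' {P Q : α → ℝ} (hsum : ∑ a, P a = ∑ a, Q a) (S : Set α) :
    prSet P S - prSet Q S ≤ tvDist P Q := by
  classical
  have key : ∀ a, S.indicator P a - S.indicator Q a ≤ (|P a - Q a| + (P a - Q a)) / 2 := by
    intro a
    by_cases h : a ∈ S <;> simp only [Set.indicator_apply, h, if_true, if_false]
    · have := le_abs_self (P a - Q a); linarith
    · have := neg_abs_le (P a - Q a); linarith
  have hz : ∑ a, (P a - Q a) = 0 := by rw [Finset.sum_sub_distrib, hsum, sub_self]
  calc prSet P S - prSet Q S = ∑ a, (S.indicator P a - S.indicator Q a) := by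
        rw [prSet, prSet, Finset.sum_sub_distrib]
    _ ≤ ∑ a, (|P a - Q a| + (P a - Q a)) / 2 := Finset.sum_le_sum fun a _ => key a
    _ = (∑ a, (|P a - Q a| + (P a - Q a))) / 2 := by rw [← Finset.sum_div]
    _ = (∑ a, |P a - Q a|) / 2 + (∑ a, (P a - Q a)) / 2 := by
        rw [Finset.sum_add_distrib]; ring
    _ = tvDist P Q := by rw [hz, tvDist]; ring

lemma lt_exp_mul_of_log_div_lt {a b c : ℝ} (ha : 0 < a) (hb : 0 ≤ b) (hc : c < 0)
    (h : Real.log (a / b) < c) : a < Real.exp c * b := by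
  have hb' : 0 < b := by
    rcases lt_or_eq_of_le hb with h' | h'
    · exact h'
    · exfalso; rw [← h', div_zero, Real.log_zero] at h; linarith
  have hd : 0 < a / b := div_pos ha hb'
  have : a / b < Real.exp c := by
    calc a / b = Real.exp (Real.log (a / b)) := (Real.exp_log hd).symm
      _ < Real.exp c := Real.exp_lt_exp.mpr h
  calc a = a / b * b := by field_simp
    _ < Real.exp c * b := by exact mul_lt_mul_of_pos_right this hb'

lemma lt_exp_neg_mul_of_lt_log {a b c : ℝ} (hb : 0 < b) (ha : 0 ≤ a) (hc : 0 ≤ c)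
    (h : c < Real.log (a / b)) : b < Real.exp (-c) * a := by
  have ha' : 0 < a := by
    rcases lt_or_eq_of_le ha with h' | h'
    · exact h'
    · exfalso; rw [← h', zero_div, Real.log_zero] at h; linarith
  have hd : 0 < a / b := div_pos ha' hb
  have hlt : Real.exp c < a / b := by
    calc Real.exp c < Real.exp (Real.log (a / b)) := Real.exp_lt_exp.mpr h
      _ = a / b := Real.exp_log hd
  have h2 : b * Real.exp c < a := by
    rw [mul_comm]; exact (lt_div_iff₀ hb).mp hlt
  have h3 : Real.exp (-c) * a = a / Real.exp c := by
    rw [Real.exp_neg]; ring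
  rw [h3, lt_div_iff₀ (Real.exp_pos c)]
  exact h2

end Helpers

section CodeLemmas

variable {X Y : Type*} [Fintype X] [Fintype Y] {M n : ℕ}

lemma sum_joint' (c : SynthCode X Y M n) (hM : 0 < M) : ∑ t, c.joint t = 1 := by
  classical
  rw [Fintype.sum_prod_type]
  have h : ∀ m : Fin M, ∑ z : (Fin n → X) × (Fin n → Y), c.joint (m, z) = (M : ℝ)⁻¹ := by
    intro m
    rw [Fintype.sum_prod_type]
    simp only [SynthCode.joint]
    rw [show (∑ x, ∑ y, (M : ℝ)⁻¹ * (c.PX m x * c.PY m y))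
        = (M : ℝ)⁻¹ * ((∑ x, c.PX m x) * (∑ y, c.PY m y)) by
      rw [Finset.sum_mul_sum, Finset.mul_sum]
      exact Finset.sum_congr rfl fun x _ => by rw [Finset.mul_sum]]
    rw [(c.PX_pmf m).2, (c.PY_pmf m).2]; ring
  simp only [h]
  rw [Finset.sum_const, Finset.card_univ, Fintype.card_fin, nsmul_eq_mul]
  field_simp

lemma prSet_joint_snd' (c : SynthCode X Y M n) (S : Set ((Fin n → X) × (Fin n → Y))) :
    prSet c.joint {t | t.2 ∈ S} = prSet c.induced S := by
  classical
  rw [prSet, prSet, Fintype.sum_prod_type, Finset.sum_comm]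
  refine Finset.sum_congr rfl fun z _ => ?_
  simp only [Set.indicator_apply, Set.mem_setOf_eq]
  by_cases h : z ∈ S
  · simp only [if_pos h, SynthCode.joint, SynthCode.induced, Finset.mul_sum]
  · simp [if_neg h]

lemma sum_prodDist' (π : X × Y → ℝ) (hπ : IsPMF π) (n : ℕ) :
    ∑ z, prodDist π n z = 1 := by
  classical
  rw [← Equiv.sum_comp (Equiv.arrowProdEquivProdArrow (Fin n) (fun _ => X) (fun _ => Y)) (prodDist π n)]
  have h : ∀ f : Fin n → X × Y, prodDist π n (Equiv.arrowProdEquivProdArrow (Fin n) (fun _ => X) (fun _ => Y) f)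
      = ∏ i, π (f i) := by
    intro f
    simp [prodDist, Equiv.arrowProdEquivProdArrow]
  simp only [h]
  rw [← Fintype.piFinset_univ, ← Finset.prod_univ_sum]
  simp [hπ.2]

end CodeLemmas

/-- Non-asymptotic information-spectrum converse (Lemma `fblidlossy`): if
`(1/n) log|ℳ_n| ≤ R` and `P(Ã) > 0`, then
`|P_{X^nY^n} − π^{⊗n}| ≥ 1 − P(𝒜₁ ∩ 𝒜₂ ∩ 𝒜₃ | Ã) − 3 e^{−nη}`. -/
theorem nonasymptotic_information_spectrum_converse
    {X Y : Type*} [Fintype X] [Fintype Y] (π : X × Y → ℝ) (hπ : IsPMF π)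
    (n M : ℕ) (hn : 0 < n) (hM : 0 < M)
    (c : SynthCode X Y M n)
    (η R : ℝ) (hη : 0 < η) (hR0 : 0 ≤ R)
    (hrate : (n : ℝ)⁻¹ * Real.log M ≤ R)
    (Q : (Fin n → X) × (Fin n → Y) → ℝ) (hQ : IsPMF Q)
    (Qc : Fin M → (Fin n → X) × (Fin n → Y) → ℝ) (hQc : ∀ m, IsPMF (Qc m)) :
    let A1 : Set (Fin M × (Fin n → X) × (Fin n → Y)) :=
      { t | -η ≤ (n : ℝ)⁻¹ * Real.log (prodDist π n t.2 / Q t.2) }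
    let A2 : Set (Fin M × (Fin n → X) × (Fin n → Y)) :=
      { t | -η ≤ (n : ℝ)⁻¹ * Real.log (c.PX t.1 t.2.1 * c.PY t.1 t.2.2 / Qc t.1 t.2) }
    let A3 : Set (Fin M × (Fin n → X) × (Fin n → Y)) :=
      { t | (n : ℝ)⁻¹ * Real.log (Qc t.1 t.2 / prodDist π n t.2) ≤ R + η }
    let Atil : Set (Fin M × (Fin n → X) × (Fin n → Y)) :=
      { t | 0 < prodDist π n t.2 } ∩ { t | 0 < c.joint t }
    0 < prSet c.joint Atil →
      1 - prSet c.joint (A1 ∩ A2 ∩ A3 ∩ Atil) / prSet c.joint Atil - 3 * Real.exp (-(n * η))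
        ≤ tvDist c.induced (prodDist π n) := by
  classical
  intro A1 A2 A3 Atil hApos
  have hnR : (0:ℝ) < n := Nat.cast_pos.mpr hn
  have hPnn : ∀ t, 0 ≤ c.joint t := fun t =>
    mul_nonneg (inv_nonneg.mpr (Nat.cast_nonneg M))
      (mul_nonneg ((c.PX_pmf t.1).1 _) ((c.PY_pmf t.1).1 _))
  have hπnn : ∀ z : (Fin n → X) × (Fin n → Y), 0 ≤ prodDist π n z := fun z =>
    Finset.prod_nonneg fun i _ => hπ.1 _
  have hPsum : ∑ t, c.joint t = 1 := sum_joint' c hM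
  have hπsum : ∑ z, prodDist π n z = 1 := sum_prodDist' π hπ n
  have hIndsum : ∑ z, c.induced z = 1 := by
    have h0 : ∀ z : (Fin n → X) × (Fin n → Y), c.induced z = ∑ m, c.joint (m, z) := fun z => by
      simp [SynthCode.induced, SynthCode.joint, Finset.mul_sum]
    calc ∑ z, c.induced z = ∑ z : (Fin n → X) × (Fin n → Y), ∑ m, c.joint (m, z) :=
          Finset.sum_congr rfl fun z _ => h0 z
      _ = ∑ m, ∑ z : (Fin n → X) × (Fin n → Y), c.joint (m, z) := Finset.sum_comm
      _ = ∑ t, c.joint t := (Fintype.sum_prod_type _).symm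
      _ = 1 := hPsum
  set E := Real.exp (-(↑n * η)) with hE
  have hEpos : 0 < E := Real.exp_pos _
  have hcneg : -((n:ℝ) * η) < 0 := by nlinarith
  set Sa : Set ((Fin n → X) × (Fin n → Y)) := {z | prodDist π n z ≤ E * Q z} with hSa
  set Sb : Set ((Fin n → X) × (Fin n → Y)) :=
    {z | prodDist π n z ≤ Real.exp (-((n:ℝ) * (R + η))) * ∑ m, Qc m z} with hSb
  set A : Set (Fin M × (Fin n → X) × (Fin n → Y)) := A1 ∩ A2 ∩ A3 ∩ Atil with hA
  have hAnn : 0 ≤ prSet c.joint A := prSet_nonneg' hPnn _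
  have hAtle : prSet c.joint Atil ≤ 1 := by
    have := prSet_le_total' hPnn Atil; rwa [hPsum] at this
  have step1 : prSet c.joint A ≤ prSet c.joint A / prSet c.joint Atil := by
    rw [le_div_iff₀ hApos]; nlinarith
  suffices hmain : 1 - prSet c.joint A ≤ tvDist c.induced (prodDist π n) + 3 * E by linarith
  have hcompl : 1 - prSet c.joint A = prSet c.joint Aᶜ := by
    have := prSet_add_compl' c.joint A; rw [hPsum] at this; linarith
  rw [hcompl]
  -- cover lemma
  have hcover : ∀ t, t ∈ Aᶜ → c.joint t ≠ 0 →
      t ∈ A2ᶜ ∨ t ∈ {t : Fin M × (Fin n → X) × (Fin n → Y) | t.2 ∈ Sa ∪ Sb} := by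
    intro t ht hne
    have hjpos : 0 < c.joint t := lt_of_le_of_ne (hPnn t) (Ne.symm hne)
    by_cases hat : t ∈ Atil
    · have hπpos : 0 < prodDist π n t.2 := hat.1
      by_cases h2 : t ∈ A2
      · by_cases h1 : t ∈ A1
        · -- then t ∉ A3
          have h3 : t ∉ A3 := fun h3 => ht ⟨⟨⟨h1, h2⟩, h3⟩, hat⟩
          have h3' : ¬ ((n:ℝ)⁻¹ * Real.log (Qc t.1 t.2 / prodDist π n t.2) ≤ R + η) := h3
          have hlog : (n:ℝ) * (R + η) < Real.log (Qc t.1 t.2 / prodDist π n t.2) := by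
            have hx := lt_of_not_ge h3'
            rw [inv_mul_eq_div, lt_div_iff₀ hnR] at hx
            nlinarith
          have key := lt_exp_neg_mul_of_lt_log hπpos ((hQc t.1).1 t.2)
            (by positivity : (0:ℝ) ≤ (n:ℝ) * (R + η)) hlog
          right
          refine Or.inr ?_
          show prodDist π n t.2 ≤ Real.exp (-((n:ℝ) * (R + η))) * ∑ m, Qc m t.2
          have hle : Qc t.1 t.2 ≤ ∑ m, Qc m t.2 :=
            Finset.single_le_sum (fun m _ => (hQc m).1 t.2) (Finset.mem_univ t.1)
          have := mul_le_mul_of_nonneg_left hle (Real.exp_pos (-((n:ℝ) * (R + η)))).le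
          linarith
        · -- t ∉ A1
          have h1' : ¬ (-η ≤ (n:ℝ)⁻¹ * Real.log (prodDist π n t.2 / Q t.2)) := h1
          have hlog : Real.log (prodDist π n t.2 / Q t.2) < -((n:ℝ) * η) := by
            have hx := lt_of_not_ge h1'
            rw [inv_mul_eq_div, div_lt_iff₀ hnR] at hx
            nlinarith
          have key := lt_exp_mul_of_log_div_lt hπpos (hQ.1 t.2) hcneg hlog
          right
          exact Or.inl (le_of_lt key)
      · exact Or.inl h2
    · right
      refine Or.inl ?_
      have hng : ¬ (0 < prodDist π n t.2) := fun hp => hat ⟨hp, hjpos⟩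
      have hz : prodDist π n t.2 = 0 := le_antisymm (not_lt.mp hng) (hπnn t.2)
      show prodDist π n t.2 ≤ E * Q t.2
      rw [hz]
      exact mul_nonneg hEpos.le (hQ.1 t.2)
  have hsplit : prSet c.joint Aᶜ ≤ prSet c.joint A2ᶜ
      + prSet c.joint {t : Fin M × (Fin n → X) × (Fin n → Y) | t.2 ∈ Sa ∪ Sb} :=
    prSet_le_add_of_cover' hPnn hcover
  -- bound on A2ᶜ
  have hA2 : prSet c.joint A2ᶜ ≤ E := by
    have hb : prSet c.joint A2ᶜ ≤
        ∑ t : Fin M × (Fin n → X) × (Fin n → Y), (M:ℝ)⁻¹ * (E * Qc t.1 t.2) := by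
      apply prSet_le_of_pointwise'
      · intro t
        exact mul_nonneg (inv_nonneg.mpr (Nat.cast_nonneg M))
          (mul_nonneg hEpos.le ((hQc t.1).1 t.2))
      · intro t ht
        have ht' : ¬ (-η ≤ (n:ℝ)⁻¹ *
            Real.log (c.PX t.1 t.2.1 * c.PY t.1 t.2.2 / Qc t.1 t.2)) := ht
        by_cases hp : 0 < c.PX t.1 t.2.1 * c.PY t.1 t.2.2
        · have hlog : Real.log (c.PX t.1 t.2.1 * c.PY t.1 t.2.2 / Qc t.1 t.2)
              < -((n:ℝ) * η) := by
            have hx := lt_of_not_ge ht'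
            rw [inv_mul_eq_div, div_lt_iff₀ hnR] at hx
            nlinarith
          have key := lt_exp_mul_of_log_div_lt hp ((hQc t.1).1 t.2) hcneg hlog
          show (M:ℝ)⁻¹ * (c.PX t.1 t.2.1 * c.PY t.1 t.2.2) ≤ (M:ℝ)⁻¹ * (E * Qc t.1 t.2)
          exact mul_le_mul_of_nonneg_left key.le (inv_nonneg.mpr (Nat.cast_nonneg M))
        · have hz : c.PX t.1 t.2.1 * c.PY t.1 t.2.2 = 0 :=
            le_antisymm (not_lt.mp hp)
              (mul_nonneg ((c.PX_pmf t.1).1 _) ((c.PY_pmf t.1).1 _))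
          show (M:ℝ)⁻¹ * (c.PX t.1 t.2.1 * c.PY t.1 t.2.2) ≤ (M:ℝ)⁻¹ * (E * Qc t.1 t.2)
          rw [hz, mul_zero]
          exact mul_nonneg (inv_nonneg.mpr (Nat.cast_nonneg M))
            (mul_nonneg hEpos.le ((hQc t.1).1 t.2))
    have htot : (∑ t : Fin M × (Fin n → X) × (Fin n → Y), (M:ℝ)⁻¹ * (E * Qc t.1 t.2)) = E := by
      rw [Fintype.sum_prod_type]
      have h0 : ∀ m : Fin M, (∑ z : (Fin n → X) × (Fin n → Y), (M:ℝ)⁻¹ * (E * Qc m z))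
          = (M:ℝ)⁻¹ * E := by
        intro m
        rw [← Finset.mul_sum, ← Finset.mul_sum, (hQc m).2, mul_one]
      simp only [h0]
      rw [Finset.sum_const, Finset.card_univ, Fintype.card_fin, nsmul_eq_mul]
      field_simp
    linarith
  -- marginalize
  have hmarg : prSet c.joint {t : Fin M × (Fin n → X) × (Fin n → Y) | t.2 ∈ Sa ∪ Sb}
      = prSet c.induced (Sa ∪ Sb) := prSet_joint_snd' c _
  -- TV bound
  have htv : prSet c.induced (Sa ∪ Sb) - prSet (prodDist π n) (Sa ∪ Sb)
      ≤ tvDist c.induced (prodDist π n) :=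
    prSet_sub_le_tv' (by rw [hIndsum, hπsum]) _
  -- bound π(Sa ∪ Sb)
  have hπSa : prSet (prodDist π n) Sa ≤ E := by
    have hb := prSet_le_of_pointwise' (P := prodDist π n) (S := Sa) (fun z => E * Q z)
      (fun z => mul_nonneg hEpos.le (hQ.1 z)) (fun z hz => hz)
    have htot : (∑ z, E * Q z) = E := by rw [← Finset.mul_sum, hQ.2, mul_one]
    linarith
  have hπSb : prSet (prodDist π n) Sb ≤ E := by
    have hb := prSet_le_of_pointwise' (P := prodDist π n) (S := Sb)
      (fun z => Real.exp (-((n:ℝ) * (R + η))) * ∑ m, Qc m z)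
      (fun z => mul_nonneg (Real.exp_pos _).le
        (Finset.sum_nonneg fun m _ => (hQc m).1 z)) (fun z hz => hz)
    have htot : (∑ z : (Fin n → X) × (Fin n → Y),
        Real.exp (-((n:ℝ) * (R + η))) * ∑ m, Qc m z)
        = Real.exp (-((n:ℝ) * (R + η))) * M := by
      rw [← Finset.mul_sum]
      congr 1
      rw [Finset.sum_comm]
      have h0 : ∀ m : Fin M, (∑ z : (Fin n → X) × (Fin n → Y), Qc m z) = 1 :=
        fun m => (hQc m).2
      simp only [h0]
      rw [Finset.sum_const, Finset.card_univ, Fintype.card_fin, nsmul_eq_mul, mul_one]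
    have hMle : (M:ℝ) ≤ Real.exp ((n:ℝ) * R) := by
      have hM0 : (0:ℝ) < M := Nat.cast_pos.mpr hM
      have hlogM : Real.log M ≤ (n:ℝ) * R := by
        have hx := hrate
        rw [inv_mul_eq_div, div_le_iff₀ hnR] at hx
        nlinarith
      calc (M:ℝ) = Real.exp (Real.log M) := (Real.exp_log hM0).symm
        _ ≤ Real.exp ((n:ℝ) * R) := Real.exp_le_exp.mpr hlogM
    have hfin : Real.exp (-((n:ℝ) * (R + η))) * M ≤ E := by
      calc Real.exp (-((n:ℝ) * (R + η))) * M
          ≤ Real.exp (-((n:ℝ) * (R + η))) * Real.exp ((n:ℝ) * R) :=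
            mul_le_mul_of_nonneg_left hMle (Real.exp_pos _).le
        _ = E := by rw [← Real.exp_add, hE]; congr 1; ring
    linarith
  have hπS : prSet (prodDist π n) (Sa ∪ Sb) ≤ E + E := by
    have := prSet_le_add_of_cover' (P := prodDist π n) hπnn
      (U := Sa ∪ Sb) (S := Sa) (T := Sb) (fun a ha _ => ha)
    linarith
  have hπSnn : 0 ≤ prSet (prodDist π n) (Sa ∪ Sb) := prSet_nonneg' hπnn _
  linarith [hsplit, hA2, hmarg, htv, hπS]
end
end

section
/- For every α ∈ (0,1], (1/α) R^{(α)} ≤ R*; moreover, there exist a decreasing sequence α_k > 0 with α_k → 0 and a sequence c(α_k) → 0 such that (1/α_k) R^{(α_k)} ≥ R* − c(α_k) for all k; in particular lim_{k→∞} (1/α_k) R^{(α_k)} = R*. -/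
open Filter

noncomputable section

/-- Marginal `Q_U` of a distribution on `X × Y × U`. -/
def margU {X Y U : Type*} [Fintype X] [Fintype Y] [Fintype U] (Q : X × Y × U → ℝ) (u : U) : ℝ :=
  ∑ p : X × Y, Q (p.1, p.2, u)

/-- Marginal `Q_{XU}` of a distribution on `X × Y × U`. -/
def margXU {X Y U : Type*} [Fintype X] [Fintype Y] [Fintype U] (Q : X × Y × U → ℝ)
    (x : X) (u : U) : ℝ := ∑ y, Q (x, y, u)

/-- Marginal `Q_{YU}` of a distribution on `X × Y × U`. -/
def margYU {X Y U : Type*} [Fintype X] [Fintype Y] [Fintype U] (Q : X × Y × U → ℝ)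
    (y : Y) (u : U) : ℝ := ∑ x, Q (x, y, u)

/-- Marginal `Q_{XY}` of a distribution on `X × Y × U`. -/
def margXY {X Y U : Type*} [Fintype X] [Fintype Y] [Fintype U] (Q : X × Y × U → ℝ)
    (x : X) (y : Y) : ℝ := ∑ u, Q (x, y, u)

/-- The set `𝒬` of distributions `Q_{XYU}` on `X × Y × U` (with `|U| = |X||Y|`)
whose `X × Y` marginal is supported inside `supp π`. -/
def QClass {X Y : Type*} [Fintype X] [Fintype Y] (π : X × Y → ℝ) :
    Set (X × Y × Fin (Fintype.card X * Fintype.card Y) → ℝ) :=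
  { Q | IsPMF Q ∧ ∀ x y, 0 < margXY Q x y → 0 < π (x, y) }

/-- The linear combination of likelihood ratios `ω^{(α)}_{Q_{XYU}}(x,y|u)`:
`ᾱ ( log (Q_{XY}/π) + log (Q_{XY|U}/(Q_{X|U}Q_{Y|U})) ) + α log (Q_{XY|U}/π)`. -/
def omegaFn {X Y U : Type*} [Fintype X] [Fintype Y] [Fintype U] (π : X × Y → ℝ) (α : ℝ)
    (Q : X × Y × U → ℝ) (z : X × Y × U) : ℝ :=
  (1 - α) * (Real.log (margXY Q z.1 z.2.1 / π (z.1, z.2.1)) +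
      Real.log (Q z * margU Q z.2.2 / (margXU Q z.1 z.2.2 * margYU Q z.2.1 z.2.2))) +
    α * Real.log (Q z / (margU Q z.2.2 * π (z.1, z.2.1)))

/-- The negative cumulant generating function `Ω^{(α,θ)}(Q_{XYU})`. -/
def OmegaQ {X Y U : Type*} [Fintype X] [Fintype Y] [Fintype U] (π : X × Y → ℝ) (α θ : ℝ)
    (Q : X × Y × U → ℝ) : ℝ :=
  -Real.log (∑ z ∈ Finset.univ.filter (fun z : X × Y × U => 0 < Q z),
    Q z * Real.exp (-(θ * omegaFn π α Q z)))

/-- The minimized negative cumulant generating function `Ω^{(α,θ)}`. -/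
def OmegaMin {X Y : Type*} [Fintype X] [Fintype Y] (π : X × Y → ℝ) (α θ : ℝ) : ℝ :=
  sInf { r | ∃ Q ∈ QClass π, r = OmegaQ π α θ Q }


/-- Relative entropy (KL divergence) between two distributions on a finite type. -/
def klDiv {α : Type*} [Fintype α] (P Q : α → ℝ) : ℝ :=
  ∑ a ∈ Finset.univ.filter (fun a => 0 < P a), P a * Real.log (P a / Q a)

/-- The conditional relative entropy `D(Q_{XY|U} ‖ Q_{X|U} Q_{Y|U} | Q_U)`. -/
def condKLind {X Y U : Type*} [Fintype X] [Fintype Y] [Fintype U] (Q : X × Y × U → ℝ) : ℝ :=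
  ∑ z ∈ Finset.univ.filter (fun z : X × Y × U => 0 < Q z),
    Q z * Real.log (Q z * margU Q z.2.2 / (margXU Q z.1 z.2.2 * margYU Q z.2.1 z.2.2))

/-- The conditional relative entropy `D(Q_{XY|U} ‖ π_{XY} | Q_U)`. -/
def condKLpi {X Y U : Type*} [Fintype X] [Fintype Y] [Fintype U] (π : X × Y → ℝ)
    (Q : X × Y × U → ℝ) : ℝ :=
  ∑ z ∈ Finset.univ.filter (fun z : X × Y × U => 0 < Q z),
    Q z * Real.log (Q z / (margU Q z.2.2 * π (z.1, z.2.1)))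

/-- `R^{(α)}(Q_{XYU}) = ᾱ (D(Q_{XY}‖π) + D(Q_{XY|U}‖Q_{X|U}Q_{Y|U}|Q_U))
       + α D(Q_{XY|U}‖π|Q_U)`. -/
def Ralpha {X Y U : Type*} [Fintype X] [Fintype Y] [Fintype U] (π : X × Y → ℝ) (α : ℝ)
    (Q : X × Y × U → ℝ) : ℝ :=
  (1 - α) * (klDiv (fun p : X × Y => margXY Q p.1 p.2) π + condKLind Q) + α * condKLpi π Q

/-- `R^{(α)} = min_{Q_{XYU} ∈ 𝒬} R^{(α)}(Q_{XYU})`. -/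
def RalphaMin {X Y : Type*} [Fintype X] [Fintype Y] (π : X × Y → ℝ) (α : ℝ) : ℝ :=
  sInf { r | ∃ Q ∈ QClass π, r = Ralpha π α Q }

section Generic

open Finset

lemma sum_mul_log_div_ge {α : Type*} (s : Finset α) (f g : α → ℝ)
    (hf : ∀ a ∈ s, 0 < f a) (hg : ∀ a ∈ s, 0 < g a) :
    ∑ a ∈ s, (f a - g a) ≤ ∑ a ∈ s, f a * Real.log (f a / g a) := by
  refine Finset.sum_le_sum fun a ha => ?_
  have hfa := hf a ha; have hga := hg a ha
  have h := Real.log_le_sub_one_of_pos (div_pos hga hfa)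
  have h2 : f a * Real.log (g a / f a) ≤ f a * (g a / f a - 1) :=
    mul_le_mul_of_nonneg_left h hfa.le
  rw [Real.log_div hga.ne' hfa.ne'] at h2
  rw [Real.log_div hfa.ne' hga.ne']
  have h3 : f a * (g a / f a - 1) = g a - f a := by field_simp
  nlinarith [h2]

lemma sum_mul_log_div_nonneg {α : Type*} (s : Finset α) (f g : α → ℝ)
    (hf : ∀ a ∈ s, 0 < f a) (hg : ∀ a ∈ s, 0 < g a)
    (hsum : ∑ a ∈ s, g a ≤ ∑ a ∈ s, f a) :
    0 ≤ ∑ a ∈ s, f a * Real.log (f a / g a) := by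
  have := sum_mul_log_div_ge s f g hf hg
  rw [Finset.sum_sub_distrib] at this
  linarith

lemma sum_mul_log_div_eq_zero {α : Type*} (s : Finset α) (f g : α → ℝ)
    (hf : ∀ a ∈ s, 0 < f a) (hg : ∀ a ∈ s, 0 < g a)
    (hsum : ∑ a ∈ s, g a ≤ ∑ a ∈ s, f a)
    (hzero : ∑ a ∈ s, f a * Real.log (f a / g a) = 0) :
    (∀ a ∈ s, f a = g a) ∧ ∑ a ∈ s, g a = ∑ a ∈ s, f a := by
  set t : α → ℝ := fun a => f a * Real.log (f a / g a) - (f a - g a) with ht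
  have htn : ∀ a ∈ s, 0 ≤ t a := by
    intro a ha
    have := sum_mul_log_div_ge {a} f g (by simpa using hf a ha) (by simpa using hg a ha)
    simp only [Finset.sum_singleton] at this
    simp [ht]; linarith
  have hts : ∑ a ∈ s, t a = ∑ a ∈ s, g a - ∑ a ∈ s, f a := by
    simp only [ht, Finset.sum_sub_distrib, hzero, Finset.sum_sub_distrib]; ring
  have hts0 : ∑ a ∈ s, t a = 0 := le_antisymm (by rw [hts]; linarith)
    (Finset.sum_nonneg htn)
  have heach := (Finset.sum_eq_zero_iff_of_nonneg htn).1 hts0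
  constructor
  · intro a ha
    by_contra hne
    have hfa := hf a ha; have hga := hg a ha
    have hlt : Real.log (g a / f a) < g a / f a - 1 :=
      Real.log_lt_sub_one_of_pos (div_pos hga hfa) (by
        intro h; apply hne; field_simp at h; linarith)
    have h2 : f a * Real.log (g a / f a) < f a * (g a / f a - 1) :=
      (mul_lt_mul_iff_right₀ hfa).2 hlt
    rw [Real.log_div hga.ne' hfa.ne'] at h2
    have h3 : f a * (g a / f a - 1) = g a - f a := by field_simp
    have h4 := heach a ha
    simp only [ht] at h4
    rw [Real.log_div hfa.ne' hga.ne'] at h4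
    nlinarith
  · linarith [hts0, hts]

end Generic
section Aux

open Finset

variable {X Y U : Type*} [Fintype X] [Fintype Y] [Fintype U]

lemma sum_z (f : X × Y × U → ℝ) : ∑ z, f z = ∑ x, ∑ y, ∑ u, f (x, y, u) := by
  rw [Fintype.sum_prod_type]
  exact Finset.sum_congr rfl fun x _ => Fintype.sum_prod_type _

lemma sum_rot (f : X → Y → U → ℝ) :
    ∑ x, ∑ y, ∑ u, f x y u = ∑ u, ∑ x, ∑ y, f x y u := by
  rw [show (∑ x, ∑ y, ∑ u, f x y u) = ∑ x, ∑ u, ∑ y, f x y u from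
    Finset.sum_congr rfl fun x _ => Finset.sum_comm, Finset.sum_comm]

lemma margU_eq (Q : X × Y × U → ℝ) (u : U) : margU Q u = ∑ x, ∑ y, Q (x, y, u) :=
  Fintype.sum_prod_type _

lemma sum_weight_U (Q : X × Y × U → ℝ) (w : U → ℝ) :
    ∑ z, Q z * w z.2.2 = ∑ u, margU Q u * w u := by
  rw [sum_z, sum_rot]
  refine Finset.sum_congr rfl fun u _ => ?_
  rw [margU_eq, Finset.sum_mul]
  refine Finset.sum_congr rfl fun x _ => ?_
  rw [Finset.sum_mul]

lemma sum_weight_XU (Q : X × Y × U → ℝ) (w : X → U → ℝ) :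
    ∑ z, Q z * w z.1 z.2.2 = ∑ x, ∑ u, margXU Q x u * w x u := by
  rw [sum_z]
  refine Finset.sum_congr rfl fun x _ => ?_
  rw [Finset.sum_comm]
  refine Finset.sum_congr rfl fun u _ => ?_
  rw [margXU, Finset.sum_mul]

lemma sum_weight_YU (Q : X × Y × U → ℝ) (w : Y → U → ℝ) :
    ∑ z, Q z * w z.2.1 z.2.2 = ∑ y, ∑ u, margYU Q y u * w y u := by
  rw [sum_z, Finset.sum_comm]
  refine Finset.sum_congr rfl fun y _ => ?_
  rw [Finset.sum_comm]
  refine Finset.sum_congr rfl fun u _ => ?_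
  rw [margYU, Finset.sum_mul]

lemma sum_weight_XY (Q : X × Y × U → ℝ) (w : X → Y → ℝ) :
    ∑ z, Q z * w z.1 z.2.1 = ∑ x, ∑ y, margXY Q x y * w x y := by
  rw [sum_z]
  refine Finset.sum_congr rfl fun x _ => Finset.sum_congr rfl fun y _ => ?_
  rw [margXY, Finset.sum_mul]

lemma sum_margU (Q : X × Y × U → ℝ) : ∑ u, margU Q u = ∑ z, Q z := by
  simpa using (sum_weight_U Q 1).symm

lemma sum_margXY (Q : X × Y × U → ℝ) :
    ∑ x, ∑ y, margXY Q x y = ∑ z, Q z := by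
  simpa using (sum_weight_XY Q fun _ _ => 1).symm

lemma margXU_sum (Q : X × Y × U → ℝ) (u : U) : ∑ x, margXU Q x u = margU Q u := by
  rw [margU_eq]; rfl

lemma margYU_sum (Q : X × Y × U → ℝ) (u : U) : ∑ y, margYU Q y u = margU Q u := by
  rw [margU_eq, Finset.sum_comm]; rfl

variable {Q : X × Y × U → ℝ}

lemma le_margU (hQ : ∀ z, 0 ≤ Q z) (z : X × Y × U) : Q z ≤ margU Q z.2.2 := by
  rw [margU_eq]
  calc Q z = Q (z.1, z.2.1, z.2.2) := by rfl
    _ ≤ ∑ y, Q (z.1, y, z.2.2) :=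
        Finset.single_le_sum (f := fun y => Q (z.1, y, z.2.2)) (fun y _ => hQ _)
          (Finset.mem_univ _)
    _ ≤ ∑ x, ∑ y, Q (x, y, z.2.2) :=
        Finset.single_le_sum (f := fun x => ∑ y, Q (x, y, z.2.2))
          (fun x _ => Finset.sum_nonneg fun y _ => hQ _) (Finset.mem_univ _)

lemma le_margXU (hQ : ∀ z, 0 ≤ Q z) (z : X × Y × U) : Q z ≤ margXU Q z.1 z.2.2 := by
  calc Q z = Q (z.1, z.2.1, z.2.2) := by rfl
    _ ≤ ∑ y, Q (z.1, y, z.2.2) :=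
        Finset.single_le_sum (f := fun y => Q (z.1, y, z.2.2)) (fun y _ => hQ _)
          (Finset.mem_univ _)

lemma le_margYU (hQ : ∀ z, 0 ≤ Q z) (z : X × Y × U) : Q z ≤ margYU Q z.2.1 z.2.2 := by
  calc Q z = Q (z.1, z.2.1, z.2.2) := by rfl
    _ ≤ ∑ x, Q (x, z.2.1, z.2.2) :=
        Finset.single_le_sum (f := fun x => Q (x, z.2.1, z.2.2)) (fun x _ => hQ _)
          (Finset.mem_univ _)

lemma le_margXY (hQ : ∀ z, 0 ≤ Q z) (z : X × Y × U) : Q z ≤ margXY Q z.1 z.2.1 := by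
  calc Q z = Q (z.1, z.2.1, z.2.2) := by rfl
    _ ≤ ∑ u, Q (z.1, z.2.1, u) :=
        Finset.single_le_sum (f := fun u => Q (z.1, z.2.1, u)) (fun u _ => hQ _)
          (Finset.mem_univ _)

lemma margU_nonneg (hQ : ∀ z, 0 ≤ Q z) (u : U) : 0 ≤ margU Q u :=
  Finset.sum_nonneg fun _ _ => hQ _
lemma margXU_nonneg (hQ : ∀ z, 0 ≤ Q z) (x : X) (u : U) : 0 ≤ margXU Q x u :=
  Finset.sum_nonneg fun _ _ => hQ _
lemma margYU_nonneg (hQ : ∀ z, 0 ≤ Q z) (y : Y) (u : U) : 0 ≤ margYU Q y u :=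
  Finset.sum_nonneg fun _ _ => hQ _
lemma margXY_nonneg (hQ : ∀ z, 0 ≤ Q z) (x : X) (y : Y) : 0 ≤ margXY Q x y :=
  Finset.sum_nonneg fun _ _ => hQ _

lemma sum_filter_pos_mul {α : Type*} [Fintype α] {f : α → ℝ} (hf : ∀ a, 0 ≤ f a)
    (g : α → ℝ) :
    ∑ a ∈ Finset.univ.filter (fun a => 0 < f a), f a * g a = ∑ a, f a * g a := by
  rw [Finset.sum_filter]
  refine Finset.sum_congr rfl fun a _ => ?_
  by_cases h : 0 < f a
  · rw [if_pos h]
  · rw [if_neg h]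
    have : f a = 0 := le_antisymm (not_lt.1 h) (hf a)
    rw [this, zero_mul]

end Aux
section Aux2

open Finset

variable {X Y U : Type*} [Fintype X] [Fintype Y] [Fintype U]

/-- `∑ Q log Q`. -/
def Hfun (Q : X × Y × U → ℝ) : ℝ := ∑ z, Q z * Real.log (Q z)

def HUfun (Q : X × Y × U → ℝ) : ℝ := ∑ u, margU Q u * Real.log (margU Q u)

def HXUfun (Q : X × Y × U → ℝ) : ℝ :=
  ∑ x, ∑ u, margXU Q x u * Real.log (margXU Q x u)

def HYUfun (Q : X × Y × U → ℝ) : ℝ :=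
  ∑ y, ∑ u, margYU Q y u * Real.log (margYU Q y u)

def LinFun (π : X × Y → ℝ) (Q : X × Y × U → ℝ) : ℝ :=
  ∑ z, Q z * Real.log (π (z.1, z.2.1))

def AXfun (π : X × Y → ℝ) (Q : X × Y × U → ℝ) : ℝ :=
  ∑ x, ∑ y, π (x, y) *
    ((margXY Q x y / π (x, y)) * Real.log (margXY Q x y / π (x, y)))

/-- Continuous version of `klDiv(Q_XY‖π) + D(Q_{XY|U}‖Q_{X|U}Q_{Y|U}|Q_U)`. -/
def Afun (π : X × Y → ℝ) (Q : X × Y × U → ℝ) : ℝ :=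
  AXfun π Q + (Hfun Q + HUfun Q - HXUfun Q - HYUfun Q)

/-- Continuous version of `condKLpi`. -/
def Bfun (π : X × Y → ℝ) (Q : X × Y × U → ℝ) : ℝ :=
  Hfun Q - HUfun Q - LinFun π Q

variable {π : X × Y → ℝ} {Q : X × Y × U → ℝ}

lemma klDiv_margXY_eq (hQ0 : ∀ z, 0 ≤ Q z)
    (hsupp : ∀ x y, 0 < margXY Q x y → 0 < π (x, y)) :
    klDiv (fun p : X × Y => margXY Q p.1 p.2) π = AXfun π Q := by
  rw [klDiv, AXfun]
  have hrw : (∑ x, ∑ y, π (x, y) *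
      ((margXY Q x y / π (x, y)) * Real.log (margXY Q x y / π (x, y))))
      = ∑ p : X × Y, π p * ((margXY Q p.1 p.2 / π p) *
          Real.log (margXY Q p.1 p.2 / π p)) :=
    (Fintype.sum_prod_type (f := fun p : X × Y => π p * ((margXY Q p.1 p.2 / π p) *
      Real.log (margXY Q p.1 p.2 / π p)))).symm
  rw [hrw, Finset.sum_filter]
  refine Finset.sum_congr rfl fun p _ => ?_
  obtain ⟨x, y⟩ := p
  dsimp only
  by_cases h : 0 < margXY Q x y
  · have hπp : π (x, y) ≠ 0 := (hsupp x y h).ne'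
    rw [if_pos h, ← mul_assoc, mul_div_cancel₀ _ hπp]
  · rw [if_neg h]
    have h0 : margXY Q x y = 0 :=
      le_antisymm (not_lt.1 h) (margXY_nonneg hQ0 _ _)
    simp [h0]

lemma condKLind_eq (hQ0 : ∀ z, 0 ≤ Q z) :
    condKLind Q = Hfun Q + HUfun Q - HXUfun Q - HYUfun Q := by
  have step1 : condKLind Q = ∑ z, Q z * (Real.log (Q z) + Real.log (margU Q z.2.2)
      - Real.log (margXU Q z.1 z.2.2) - Real.log (margYU Q z.2.1 z.2.2)) := by
    rw [condKLind, sum_filter_pos_mul hQ0]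
    refine Finset.sum_congr rfl fun z _ => ?_
    by_cases h : 0 < Q z
    · have hU : 0 < margU Q z.2.2 := lt_of_lt_of_le h (le_margU hQ0 z)
      have hXU : 0 < margXU Q z.1 z.2.2 := lt_of_lt_of_le h (le_margXU hQ0 z)
      have hYU : 0 < margYU Q z.2.1 z.2.2 := lt_of_lt_of_le h (le_margYU hQ0 z)
      rw [Real.log_div (by positivity) (by positivity), Real.log_mul h.ne' hU.ne',
        Real.log_mul hXU.ne' hYU.ne']
      ring
    · have h0 : Q z = 0 := le_antisymm (not_lt.1 h) (hQ0 z)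
      rw [h0, zero_mul, zero_mul]
  rw [step1]
  have expand : ∀ z : X × Y × U, Q z * (Real.log (Q z) + Real.log (margU Q z.2.2)
      - Real.log (margXU Q z.1 z.2.2) - Real.log (margYU Q z.2.1 z.2.2))
      = Q z * Real.log (Q z) + Q z * Real.log (margU Q z.2.2)
        - Q z * Real.log (margXU Q z.1 z.2.2)
        - Q z * Real.log (margYU Q z.2.1 z.2.2) := fun z => by ring
  simp_rw [expand]
  rw [Finset.sum_sub_distrib, Finset.sum_sub_distrib, Finset.sum_add_distrib]
  rw [sum_weight_U Q (fun u => Real.log (margU Q u)),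
    sum_weight_XU Q (fun x u => Real.log (margXU Q x u)),
    sum_weight_YU Q (fun y u => Real.log (margYU Q y u))]
  rfl

lemma condKLpi_eq (hQ0 : ∀ z, 0 ≤ Q z)
    (hsupp : ∀ x y, 0 < margXY Q x y → 0 < π (x, y)) :
    condKLpi π Q = Hfun Q - HUfun Q - LinFun π Q := by
  have step1 : condKLpi π Q = ∑ z, Q z * (Real.log (Q z) - Real.log (margU Q z.2.2)
      - Real.log (π (z.1, z.2.1))) := by
    rw [condKLpi, sum_filter_pos_mul hQ0]
    refine Finset.sum_congr rfl fun z _ => ?_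
    by_cases h : 0 < Q z
    · have hU : 0 < margU Q z.2.2 := lt_of_lt_of_le h (le_margU hQ0 z)
      have hπp : 0 < π (z.1, z.2.1) :=
        hsupp z.1 z.2.1 (lt_of_lt_of_le h (le_margXY hQ0 z))
      rw [Real.log_div h.ne' (by positivity), Real.log_mul hU.ne' hπp.ne']
      ring
    · have h0 : Q z = 0 := le_antisymm (not_lt.1 h) (hQ0 z)
      rw [h0, zero_mul, zero_mul]
  rw [step1]
  have expand : ∀ z : X × Y × U, Q z * (Real.log (Q z) - Real.log (margU Q z.2.2)
      - Real.log (π (z.1, z.2.1)))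
      = Q z * Real.log (Q z) - Q z * Real.log (margU Q z.2.2)
        - Q z * Real.log (π (z.1, z.2.1)) := fun z => by ring
  simp_rw [expand]
  rw [Finset.sum_sub_distrib, Finset.sum_sub_distrib,
    sum_weight_U Q (fun u => Real.log (margU Q u))]
  rfl

end Aux2
section Aux3

open Finset

variable {X Y U : Type*} [Fintype X] [Fintype Y] [Fintype U]
variable {π : X × Y → ℝ} {Q : X × Y × U → ℝ}

/-- The independent-coupling reference density appearing in `condKLind`. -/
def gind (Q : X × Y × U → ℝ) (z : X × Y × U) : ℝ :=
  margXU Q z.1 z.2.2 * margYU Q z.2.1 z.2.2 / margU Q z.2.2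

lemma condKLind_eq_sum (hQ0 : ∀ z, 0 ≤ Q z) :
    condKLind Q = ∑ z ∈ Finset.univ.filter (fun z : X × Y × U => 0 < Q z),
      Q z * Real.log (Q z / gind Q z) := by
  rw [condKLind]
  refine Finset.sum_congr rfl fun z hz => ?_
  have h : 0 < Q z := (Finset.mem_filter.1 hz).2
  congr 1
  rw [gind, div_div_eq_mul_div]

lemma sum_gind_filterU (hQ0 : ∀ z, 0 ≤ Q z) :
    ∑ z ∈ Finset.univ.filter (fun z : X × Y × U => 0 < margU Q z.2.2), gind Q z
      = ∑ u, margU Q u := by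
  rw [Finset.sum_filter]
  have hz : ∑ z : X × Y × U, (if 0 < margU Q z.2.2 then gind Q z else 0)
      = ∑ x, ∑ y, ∑ u, (if 0 < margU Q u then gind Q (x, y, u) else 0) :=
    sum_z _
  rw [hz, sum_rot]
  refine Finset.sum_congr rfl fun u _ => ?_
  by_cases h : 0 < margU Q u
  · simp only [if_pos h]
    have : ∀ x : X, ∑ y : Y, gind Q (x, y, u)
        = margXU Q x u * (∑ y, margYU Q y u) / margU Q u := by
      intro x
      rw [Finset.mul_sum, Finset.sum_div]
      rfl
    simp_rw [this, margYU_sum]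
    rw [← Finset.sum_div, ← Finset.sum_mul, margXU_sum]
    field_simp
  · simp only [if_neg h, Finset.sum_const_zero]
    exact (le_antisymm (not_lt.1 h) (margU_nonneg hQ0 u)).symm

lemma condKLind_nonneg (hQ0 : ∀ z, 0 ≤ Q z) (hQ1 : ∑ z, Q z = 1) :
    0 ≤ condKLind Q := by
  rw [condKLind_eq_sum hQ0]
  set s := Finset.univ.filter (fun z : X × Y × U => 0 < Q z) with hs
  refine sum_mul_log_div_nonneg s Q (gind Q)
    (fun z hz => (Finset.mem_filter.1 hz).2) (fun z hz => ?_) ?_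
  · have h : 0 < Q z := (Finset.mem_filter.1 hz).2
    have hU : 0 < margU Q z.2.2 := lt_of_lt_of_le h (le_margU hQ0 z)
    have hXU : 0 < margXU Q z.1 z.2.2 := lt_of_lt_of_le h (le_margXU hQ0 z)
    have hYU : 0 < margYU Q z.2.1 z.2.2 := lt_of_lt_of_le h (le_margYU hQ0 z)
    exact div_pos (mul_pos hXU hYU) hU
  · have hsub : s ⊆ Finset.univ.filter (fun z : X × Y × U => 0 < margU Q z.2.2) := by
      intro z hz
      exact Finset.mem_filter.2 ⟨Finset.mem_univ _,
        lt_of_lt_of_le (Finset.mem_filter.1 hz).2 (le_margU hQ0 z)⟩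
    have h1 : ∑ z ∈ s, gind Q z
        ≤ ∑ z ∈ Finset.univ.filter (fun z : X × Y × U => 0 < margU Q z.2.2),
            gind Q z := by
      refine Finset.sum_le_sum_of_subset_of_nonneg hsub fun z hz _ => ?_
      have hU : 0 < margU Q z.2.2 := (Finset.mem_filter.1 hz).2
      exact div_nonneg (mul_nonneg (margXU_nonneg hQ0 _ _) (margYU_nonneg hQ0 _ _)) hU.le
    have h2 : ∑ z ∈ s, Q z = 1 := by
      rw [← hQ1]
      exact Finset.sum_filter_of_ne fun z _ hne => lt_of_le_of_ne (hQ0 z) (Ne.symm hne)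
    rw [h2, sum_gind_filterU hQ0, sum_margU, hQ1] at *
    linarith [h1]

lemma condKLpi_nonneg (hπ : IsPMF π) (hQ0 : ∀ z, 0 ≤ Q z) (hQ1 : ∑ z, Q z = 1)
    (hsupp : ∀ x y, 0 < margXY Q x y → 0 < π (x, y)) :
    0 ≤ condKLpi π Q := by
  rw [condKLpi]
  set s := Finset.univ.filter (fun z : X × Y × U => 0 < Q z) with hs
  have hform : ∀ z ∈ s, Q z * Real.log (Q z / (margU Q z.2.2 * π (z.1, z.2.1)))
      = Q z * Real.log (Q z / ((fun z : X × Y × U => margU Q z.2.2 * π (z.1, z.2.1)) z)) :=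
    fun z _ => rfl
  refine sum_mul_log_div_nonneg s Q (fun z => margU Q z.2.2 * π (z.1, z.2.1))
    (fun z hz => (Finset.mem_filter.1 hz).2) (fun z hz => ?_) ?_
  · have h : 0 < Q z := (Finset.mem_filter.1 hz).2
    exact mul_pos (lt_of_lt_of_le h (le_margU hQ0 z))
      (hsupp z.1 z.2.1 (lt_of_lt_of_le h (le_margXY hQ0 z)))
  · have h2 : ∑ z ∈ s, Q z = 1 := by
      rw [← hQ1]
      exact Finset.sum_filter_of_ne fun z _ hne => lt_of_le_of_ne (hQ0 z) (Ne.symm hne)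
    have h1 : ∑ z ∈ s, margU Q z.2.2 * π (z.1, z.2.1)
        ≤ ∑ z : X × Y × U, margU Q z.2.2 * π (z.1, z.2.1) := by
      refine Finset.sum_le_sum_of_subset_of_nonneg (Finset.filter_subset _ _)
        fun z _ _ => mul_nonneg (margU_nonneg hQ0 _) (hπ.1 _)
    have h3 : ∑ z : X × Y × U, margU Q z.2.2 * π (z.1, z.2.1) = ∑ z : X × Y × U, Q z := by
      rw [sum_z (fun z => margU Q z.2.2 * π (z.1, z.2.1)), sum_rot]
      have hππ : ∑ x, ∑ y, π (x, y) = 1 := by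
        rw [← Fintype.sum_prod_type (f := fun p : X × Y => π p)]
        exact hπ.2
      have : ∀ u, ∑ x, ∑ y, margU Q u * π (x, y) = margU Q u := by
        intro u
        simp_rw [← Finset.mul_sum]
        rw [hππ, mul_one]
      simp_rw [this]
      rw [sum_margU]
    show ∑ z ∈ s, margU Q z.2.2 * π (z.1, z.2.1) ≤ ∑ z ∈ s, Q z
    rw [h2, ← hQ1, ← h3]
    exact h1

lemma mutualInfoW_nonneg {P : X × Y × U → ℝ} (hP : IsPMF P) : 0 ≤ mutualInfoW P := by
  obtain ⟨hP0, hP1⟩ := hP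
  rw [mutualInfoW]
  refine sum_mul_log_div_nonneg _ P
    (fun z => (∑ w, P (z.1, z.2.1, w)) * (∑ p : X × Y, P (p.1, p.2, z.2.2)))
    (fun z hz => (Finset.mem_filter.1 hz).2) (fun z hz => ?_) ?_
  · have h : 0 < P z := (Finset.mem_filter.1 hz).2
    exact mul_pos (lt_of_lt_of_le h (le_margXY hP0 z))
      (lt_of_lt_of_le h (le_margU hP0 z))
  · have h2 : ∑ z ∈ Finset.univ.filter (fun z : X × Y × U => 0 < P z), P z = 1 := by
      rw [← hP1]
      exact Finset.sum_filter_of_ne fun z _ hne => lt_of_le_of_ne (hP0 z) (Ne.symm hne)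
    have h1 : ∑ z ∈ Finset.univ.filter (fun z : X × Y × U => 0 < P z),
          (∑ w, P (z.1, z.2.1, w)) * (∑ p : X × Y, P (p.1, p.2, z.2.2))
        ≤ ∑ z : X × Y × U, margXY P z.1 z.2.1 * margU P z.2.2 :=
      Finset.sum_le_sum_of_subset_of_nonneg (Finset.filter_subset _ _)
        fun z _ _ => mul_nonneg (margXY_nonneg hP0 _ _) (margU_nonneg hP0 _)
    have h3 : ∑ z : X × Y × U, margXY P z.1 z.2.1 * margU P z.2.2 = 1 := by
      rw [sum_z (fun z => margXY P z.1 z.2.1 * margU P z.2.2)]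
      have : ∀ x y, ∑ u, margXY P x y * margU P u = margXY P x y := by
        intro x y
        rw [← Finset.mul_sum, sum_margU, hP1, mul_one]
      simp_rw [this]
      rw [sum_margXY, hP1]
    show ∑ z ∈ Finset.univ.filter (fun z : X × Y × U => 0 < P z),
        (∑ w, P (z.1, z.2.1, w)) * (∑ p : X × Y, P (p.1, p.2, z.2.2))
      ≤ ∑ z ∈ Finset.univ.filter (fun z : X × Y × U => 0 < P z), P z
    rw [h2, ← h3]
    exact h1

end Aux3
section Aux4

open Finset

variable {X Y U : Type*} [Fintype X] [Fintype Y] [Fintype U]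
variable {π : X × Y → ℝ} {Q : X × Y × U → ℝ}

lemma klDiv_margXY_nonneg_aux (hπ : IsPMF π) (hQ0 : ∀ z, 0 ≤ Q z) (hQ1 : ∑ z, Q z = 1)
    (hsupp : ∀ x y, 0 < margXY Q x y → 0 < π (x, y)) :
    (∑ p ∈ Finset.univ.filter (fun p : X × Y => 0 < margXY Q p.1 p.2), π p
      ≤ ∑ p ∈ Finset.univ.filter (fun p : X × Y => 0 < margXY Q p.1 p.2),
          margXY Q p.1 p.2)
    ∧ ∑ p ∈ Finset.univ.filter (fun p : X × Y => 0 < margXY Q p.1 p.2),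
        margXY Q p.1 p.2 = 1 := by
  have h2 : ∑ p ∈ Finset.univ.filter (fun p : X × Y => 0 < margXY Q p.1 p.2),
      margXY Q p.1 p.2 = 1 := by
    rw [Finset.sum_filter_of_ne fun p _ hne =>
      lt_of_le_of_ne (margXY_nonneg hQ0 _ _) (Ne.symm hne)]
    have hst : ∑ p : X × Y, margXY Q p.1 p.2 = ∑ x, ∑ y, margXY Q x y :=
      Fintype.sum_prod_type _
    rw [hst, sum_margXY, hQ1]
  refine ⟨?_, h2⟩
  rw [h2, ← hπ.2]
  exact Finset.sum_le_sum_of_subset_of_nonneg (Finset.filter_subset _ _)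
    fun p _ _ => hπ.1 p

lemma klDiv_margXY_nonneg (hπ : IsPMF π) (hQ0 : ∀ z, 0 ≤ Q z) (hQ1 : ∑ z, Q z = 1)
    (hsupp : ∀ x y, 0 < margXY Q x y → 0 < π (x, y)) :
    0 ≤ klDiv (fun p : X × Y => margXY Q p.1 p.2) π := by
  obtain ⟨h1, h2⟩ := klDiv_margXY_nonneg_aux hπ hQ0 hQ1 hsupp
  exact sum_mul_log_div_nonneg _ _ π
    (fun p hp => (Finset.mem_filter.1 hp).2)
    (fun p hp => hsupp p.1 p.2 (Finset.mem_filter.1 hp).2) h1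

lemma klDiv_eq_zero_margXY (hπ : IsPMF π) (hQ0 : ∀ z, 0 ≤ Q z) (hQ1 : ∑ z, Q z = 1)
    (hsupp : ∀ x y, 0 < margXY Q x y → 0 < π (x, y))
    (h0 : klDiv (fun p : X × Y => margXY Q p.1 p.2) π = 0) :
    ∀ x y, margXY Q x y = π (x, y) := by
  obtain ⟨h1, h2⟩ := klDiv_margXY_nonneg_aux hπ hQ0 hQ1 hsupp
  set s := Finset.univ.filter (fun p : X × Y => 0 < margXY Q p.1 p.2) with hs
  obtain ⟨heq, hmass⟩ := sum_mul_log_div_eq_zero s _ π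
    (fun p hp => (Finset.mem_filter.1 hp).2)
    (fun p hp => hsupp p.1 p.2 (Finset.mem_filter.1 hp).2) h1 h0
  intro x y
  by_cases h : 0 < margXY Q x y
  · exact heq (x, y) (Finset.mem_filter.2 ⟨Finset.mem_univ _, h⟩)
  · have hm0 : margXY Q x y = 0 := le_antisymm (not_lt.1 h) (margXY_nonneg hQ0 _ _)
    rw [hm0]
    -- π vanishes off s
    have hπs : ∑ p ∈ s, π p = 1 := by rw [hmass, h2]
    have hsplit := Finset.sum_filter_add_sum_filter_not Finset.univ
      (fun p : X × Y => 0 < margXY Q p.1 p.2) π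
    have : ∑ p ∈ Finset.univ.filter (fun p : X × Y => ¬ 0 < margXY Q p.1 p.2), π p = 0 := by
      have hππ : ∑ p : X × Y, π p = 1 := hπ.2
      rw [← hs] at hsplit
      rw [hπs, hππ] at hsplit
      linarith
    have := (Finset.sum_eq_zero_iff_of_nonneg fun p _ => hπ.1 p).1 this
    exact (this (x, y) (Finset.mem_filter.2 ⟨Finset.mem_univ _, by
      simpa using h⟩)).symm

lemma condKLind_eq_zero_markov (hQ0 : ∀ z, 0 ≤ Q z) (hQ1 : ∑ z, Q z = 1)
    (h0 : condKLind Q = 0) : IsMarkovXWY Q := by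
  classical
  set s := Finset.univ.filter (fun z : X × Y × U => 0 < Q z) with hs
  set t := Finset.univ.filter (fun z : X × Y × U => 0 < margU Q z.2.2) with hts
  have hsub : s ⊆ t := by
    intro z hz
    exact Finset.mem_filter.2 ⟨Finset.mem_univ _,
      lt_of_lt_of_le (Finset.mem_filter.1 hz).2 (le_margU hQ0 z)⟩
  have hgpos : ∀ z ∈ s, 0 < gind Q z := by
    intro z hz
    have h : 0 < Q z := (Finset.mem_filter.1 hz).2
    exact div_pos (mul_pos (lt_of_lt_of_le h (le_margXU hQ0 z))
      (lt_of_lt_of_le h (le_margYU hQ0 z))) (lt_of_lt_of_le h (le_margU hQ0 z))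
  have hgnn : ∀ z ∈ t, 0 ≤ gind Q z := by
    intro z hz
    exact div_nonneg (mul_nonneg (margXU_nonneg hQ0 _ _) (margYU_nonneg hQ0 _ _))
      ((Finset.mem_filter.1 hz).2).le
  have hQs : ∑ z ∈ s, Q z = 1 := by
    rw [← hQ1]
    exact Finset.sum_filter_of_ne fun z _ hne => lt_of_le_of_ne (hQ0 z) (Ne.symm hne)
  have hgt : ∑ z ∈ t, gind Q z = 1 := by
    rw [hts, sum_gind_filterU hQ0, sum_margU, hQ1]
  have hgs_le : ∑ z ∈ s, gind Q z ≤ 1 := by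
    rw [← hgt]
    exact Finset.sum_le_sum_of_subset_of_nonneg hsub fun z hz _ => hgnn z hz
  have h0' : ∑ z ∈ s, Q z * Real.log (Q z / gind Q z) = 0 := by
    rw [← condKLind_eq_sum hQ0, h0]
  obtain ⟨heq, hmass⟩ := sum_mul_log_div_eq_zero s Q (gind Q)
    (fun z hz => (Finset.mem_filter.1 hz).2) hgpos (by rw [hQs]; exact hgs_le) h0'
  -- gind vanishes on t \ s
  have hdiff : ∀ z ∈ t, z ∉ s → gind Q z = 0 := by
    have hsd : ∑ z ∈ t \ s, gind Q z = 0 := by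
      have := Finset.sum_sdiff (f := gind Q) hsub
      rw [hmass, hQs] at this
      linarith [hgt, this]
    intro z hzt hzs
    exact (Finset.sum_eq_zero_iff_of_nonneg fun z hz =>
      hgnn z (Finset.mem_sdiff.1 hz).1).1 hsd z (Finset.mem_sdiff.2 ⟨hzt, hzs⟩)
  intro x y w
  show Q (x, y, w) * margU Q w = margXU Q x w * margYU Q y w
  by_cases hU : 0 < margU Q w
  · set z : X × Y × U := (x, y, w) with hz
    by_cases hzs : z ∈ s
    · have := heq z hzs
      rw [gind] at this
      have hQz : Q z * margU Q w = margXU Q x w * margYU Q y w := by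
        field_simp [hU.ne'] at this
        rw [this]; exact div_mul_cancel₀ _ hU.ne'
      exact hQz
    · have hzt : z ∈ t := Finset.mem_filter.2 ⟨Finset.mem_univ _, hU⟩
      have hg0 := hdiff z hzt hzs
      rw [gind, div_eq_zero_iff] at hg0
      have hnum : margXU Q x w * margYU Q y w = 0 := by
        rcases hg0 with h | h
        · exact h
        · exact absurd h hU.ne'
      have hQz : Q z = 0 := by
        by_contra hne
        exact hzs (Finset.mem_filter.2 ⟨Finset.mem_univ _,
          lt_of_le_of_ne (hQ0 z) (Ne.symm hne)⟩)
      rw [hQz, zero_mul, hnum]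
  · have hU0 : margU Q w = 0 := le_antisymm (not_lt.1 hU) (margU_nonneg hQ0 w)
    have hXU0 : margXU Q x w = 0 := by
      refine le_antisymm ?_ (margXU_nonneg hQ0 _ _)
      rw [← hU0, ← margXU_sum Q w]
      exact Finset.single_le_sum (f := fun x => margXU Q x w)
        (fun x _ => margXU_nonneg hQ0 x w) (Finset.mem_univ x)
    rw [hU0, mul_zero, hXU0, zero_mul]

end Aux4
section Aux5

open Finset

variable {X Y U : Type*} [Fintype X] [Fintype Y] [Fintype U]
variable {π : X × Y → ℝ} {Q : X × Y × U → ℝ}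

lemma condKLind_of_markov (hQ0 : ∀ z, 0 ≤ Q z) (hm : IsMarkovXWY Q) :
    condKLind Q = 0 := by
  rw [condKLind]
  refine Finset.sum_eq_zero fun z hz => ?_
  have h : 0 < Q z := (Finset.mem_filter.1 hz).2
  have hU : 0 < margU Q z.2.2 := lt_of_lt_of_le h (le_margU hQ0 z)
  have hXU : 0 < margXU Q z.1 z.2.2 := lt_of_lt_of_le h (le_margXU hQ0 z)
  have hYU : 0 < margYU Q z.2.1 z.2.2 := lt_of_lt_of_le h (le_margYU hQ0 z)
  have hmz : Q z * margU Q z.2.2 = margXU Q z.1 z.2.2 * margYU Q z.2.1 z.2.2 :=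
    hm z.1 z.2.1 z.2.2
  have harg : Q z * margU Q z.2.2 / (margXU Q z.1 z.2.2 * margYU Q z.2.1 z.2.2) = 1 := by
    rw [hmz]
    exact div_self (by positivity)
  rw [harg, Real.log_one, mul_zero]

lemma klDiv_zero_of_eq (heq : ∀ x y, margXY Q x y = π (x, y)) :
    klDiv (fun p : X × Y => margXY Q p.1 p.2) π = 0 := by
  rw [klDiv]
  refine Finset.sum_eq_zero fun p hp => ?_
  have h : 0 < margXY Q p.1 p.2 := (Finset.mem_filter.1 hp).2
  have : margXY Q p.1 p.2 / π p = 1 := by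
    rw [← heq p.1 p.2]
    exact div_self h.ne'
  rw [this, Real.log_one, mul_zero]

lemma condKLpi_eq_mutualInfoW (heq : ∀ x y, margXY Q x y = π (x, y)) :
    condKLpi π Q = mutualInfoW Q := by
  rw [condKLpi, mutualInfoW]
  refine Finset.sum_congr rfl fun z hz => ?_
  have h1 : (∑ w, Q (z.1, z.2.1, w)) = π (z.1, z.2.1) := heq z.1 z.2.1
  have h2 : (∑ p : X × Y, Q (p.1, p.2, z.2.2)) = margU Q z.2.2 := rfl
  rw [h1, h2, mul_comm (margU Q z.2.2) (π (z.1, z.2.1))]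

/-- Membership in the defining set of `CWyner` lies in `QClass` and has zero `A`-part. -/
lemma Ralpha_of_wyner (hπ : IsPMF π) {P : X × Y × U → ℝ} (hP : IsPMF P)
    (hmarg : ∀ x y, (∑ w, P (x, y, w)) = π (x, y)) (hm : IsMarkovXWY P) (α : ℝ) :
    Ralpha π α P = α * mutualInfoW P := by
  have hmarg' : ∀ x y, margXY P x y = π (x, y) := hmarg
  rw [Ralpha, klDiv_zero_of_eq hmarg', condKLind_of_markov hP.1 hm,
    condKLpi_eq_mutualInfoW hmarg']
  ring

end Aux5
section Aux6

open Finset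

variable {X Y U : Type*} [Fintype X] [Fintype Y] [Fintype U]

open Classical in
/-- The diagonal coupling `P(x,y,u) = π(x,y) 1{u = e(x,y)}`. -/
def diagCoupling (π : X × Y → ℝ) (e : X × Y ≃ U) : X × Y × U → ℝ :=
  fun z => if z.2.2 = e (z.1, z.2.1) then π (z.1, z.2.1) else 0

variable {π : X × Y → ℝ} (e : X × Y ≃ U)

lemma diag_cond_iff (x : X) (y : Y) (u : U) :
    (u = e (x, y)) ↔ ((e.symm u).1 = x ∧ (e.symm u).2 = y) := by
  rw [← Equiv.symm_apply_eq, Prod.ext_iff]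

lemma diagCoupling_nonneg (hπ : IsPMF π) (z : X × Y × U) : 0 ≤ diagCoupling π e z := by
  rw [diagCoupling]
  split
  · exact hπ.1 _
  · exact le_refl 0

lemma diagCoupling_margXY (x : X) (y : Y) :
    margXY (diagCoupling π e) x y = π (x, y) := by
  classical
  rw [margXY]
  simp [diagCoupling]

lemma diagCoupling_isPMF (hπ : IsPMF π) : IsPMF (diagCoupling π e) := by
  classical
  refine ⟨diagCoupling_nonneg e hπ, ?_⟩
  rw [sum_z (diagCoupling π e)]
  have h1 : ∀ x y, ∑ u, diagCoupling π e (x, y, u) = π (x, y) := fun x y =>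
    diagCoupling_margXY e x y
  simp_rw [h1]
  have h2 : ∑ x, ∑ y, π (x, y) = ∑ p : X × Y, π p :=
    (Fintype.sum_prod_type (f := fun p : X × Y => π p)).symm
  rw [h2, hπ.2]

lemma diagCoupling_margU (u : U) :
    margU (diagCoupling π e) u = π (e.symm u) := by
  classical
  rw [margU]
  have h1 : ∀ p : X × Y, diagCoupling π e (p.1, p.2, u)
      = if p = e.symm u then π p else 0 := by
    intro p
    simp only [diagCoupling]
    refine if_congr ?_ rfl rfl
    rw [← Equiv.symm_apply_eq, Prod.mk.eta]
    exact eq_comm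
  simp_rw [h1]
  rw [Finset.sum_ite_eq' Finset.univ (e.symm u) π]
  simp

open Classical in
lemma diagCoupling_margXU (x : X) (u : U) :
    margXU (diagCoupling π e) x u
      = if (e.symm u).1 = x then π (e.symm u) else 0 := by
  classical
  rw [margXU]
  have h1 : ∀ y, diagCoupling π e (x, y, u)
      = if (e.symm u).1 = x ∧ (e.symm u).2 = y then π (x, y) else 0 := by
    intro y
    simp only [diagCoupling]
    exact if_congr (diag_cond_iff e x y u) rfl rfl
  simp_rw [h1]
  by_cases hx : (e.symm u).1 = x
  · simp only [hx, true_and, if_true]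
    rw [Finset.sum_ite_eq Finset.univ ((e.symm u).2) (fun y => π (x, y))]
    simp only [Finset.mem_univ, if_true]
    rw [← hx]
  · simp [hx]

open Classical in
lemma diagCoupling_margYU (y : Y) (u : U) :
    margYU (diagCoupling π e) y u
      = if (e.symm u).2 = y then π (e.symm u) else 0 := by
  classical
  rw [margYU]
  have h1 : ∀ x, diagCoupling π e (x, y, u)
      = if (e.symm u).1 = x ∧ (e.symm u).2 = y then π (x, y) else 0 := by
    intro x
    simp only [diagCoupling]
    exact if_congr (diag_cond_iff e x y u) rfl rfl
  simp_rw [h1]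
  by_cases hy : (e.symm u).2 = y
  · simp only [hy, and_true, if_true]
    rw [Finset.sum_ite_eq Finset.univ ((e.symm u).1) (fun x => π (x, y))]
    simp only [Finset.mem_univ, if_true]
    rw [← hy]
  · simp [hy]

lemma diagCoupling_markov : IsMarkovXWY (diagCoupling π e) := by
  classical
  intro x y w
  show diagCoupling π e (x, y, w) * margU (diagCoupling π e) w
      = margXU (diagCoupling π e) x w * margYU (diagCoupling π e) y w
  rw [diagCoupling_margU, diagCoupling_margXU, diagCoupling_margYU]
  simp only [diagCoupling]
  rw [if_congr (diag_cond_iff e x y w) rfl rfl]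
  by_cases hx : (e.symm w).1 = x <;> by_cases hy : (e.symm w).2 = y
  · have hq : ((x : X), (y : Y)) = e.symm w := by rw [← hx, ← hy]
    rw [if_pos ⟨hx, hy⟩, if_pos hx, if_pos hy, ← hq]
  · rw [if_neg (fun h => hy h.2), if_neg hy, zero_mul, mul_zero]
  · rw [if_neg (fun h => hx h.1), if_neg hx, zero_mul, zero_mul]
  · rw [if_neg (fun h => hx h.1), if_neg hx, zero_mul, zero_mul]

end Aux6
section Aux7

open Finset

variable {X Y U : Type*} [Fintype X] [Fintype Y] [Fintype U]

lemma continuous_margU_fn (u : U) :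
    Continuous fun Q : X × Y × U → ℝ => margU Q u :=
  continuous_finset_sum _ fun p _ => continuous_apply _

lemma continuous_margXU_fn (x : X) (u : U) :
    Continuous fun Q : X × Y × U → ℝ => margXU Q x u :=
  continuous_finset_sum _ fun y _ => continuous_apply _

lemma continuous_margYU_fn (y : Y) (u : U) :
    Continuous fun Q : X × Y × U → ℝ => margYU Q y u :=
  continuous_finset_sum _ fun x _ => continuous_apply _

lemma continuous_margXY_fn (x : X) (y : Y) :
    Continuous fun Q : X × Y × U → ℝ => margXY Q x y :=
  continuous_finset_sum _ fun u _ => continuous_apply _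

lemma continuous_Hfun : Continuous fun Q : X × Y × U → ℝ => Hfun Q :=
  continuous_finset_sum _ fun z _ =>
    Real.continuous_mul_log.comp (continuous_apply z)

lemma continuous_HUfun : Continuous fun Q : X × Y × U → ℝ => HUfun Q :=
  continuous_finset_sum _ fun u _ =>
    Real.continuous_mul_log.comp (continuous_margU_fn u)

lemma continuous_HXUfun : Continuous fun Q : X × Y × U → ℝ => HXUfun Q :=
  continuous_finset_sum _ fun x _ => continuous_finset_sum _ fun u _ =>
    Real.continuous_mul_log.comp (continuous_margXU_fn x u)

lemma continuous_HYUfun : Continuous fun Q : X × Y × U → ℝ => HYUfun Q :=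
  continuous_finset_sum _ fun y _ => continuous_finset_sum _ fun u _ =>
    Real.continuous_mul_log.comp (continuous_margYU_fn y u)

lemma continuous_LinFun (π : X × Y → ℝ) :
    Continuous fun Q : X × Y × U → ℝ => LinFun π Q :=
  continuous_finset_sum _ fun z _ => (continuous_apply z).mul continuous_const

lemma continuous_AXfun (π : X × Y → ℝ) :
    Continuous fun Q : X × Y × U → ℝ => AXfun π Q :=
  continuous_finset_sum _ fun x _ => continuous_finset_sum _ fun y _ =>
    continuous_const.mul
      (Real.continuous_mul_log.comp ((continuous_margXY_fn x y).div_const _))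

lemma continuous_Afun (π : X × Y → ℝ) :
    Continuous fun Q : X × Y × U → ℝ => Afun π Q :=
  (continuous_AXfun π).add
    (((continuous_Hfun.add continuous_HUfun).sub continuous_HXUfun).sub
      continuous_HYUfun)

lemma continuous_Bfun (π : X × Y → ℝ) :
    Continuous fun Q : X × Y × U → ℝ => Bfun π Q :=
  (continuous_Hfun.sub continuous_HUfun).sub (continuous_LinFun π)

end Aux7

section Aux8

open Finset

variable {X Y : Type*} [Fintype X] [Fintype Y] (π : X × Y → ℝ)

lemma isClosed_QClass : IsClosed (QClass π) := by
  have hdecomp : QClass π = ({Q : X × Y × Fin (Fintype.card X * Fintype.card Y) → ℝ |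
        ∀ z, 0 ≤ Q z} ∩ {Q | ∑ z, Q z = 1}) ∩
      ⋂ p : X × Y, {Q | 0 < margXY Q p.1 p.2 → 0 < π (p.1, p.2)} := by
    ext Q
    simp only [QClass, IsPMF, Set.mem_inter_iff, Set.mem_setOf_eq, Set.mem_iInter]
    constructor
    · rintro ⟨⟨h0, h1⟩, h2⟩
      exact ⟨⟨h0, h1⟩, fun p => h2 p.1 p.2⟩
    · rintro ⟨⟨h0, h1⟩, h2⟩
      exact ⟨⟨h0, h1⟩, fun x y => h2 (x, y)⟩
  rw [hdecomp]
  refine IsClosed.inter (IsClosed.inter ?_ ?_) (isClosed_iInter fun p => ?_)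
  · have : {Q : X × Y × Fin (Fintype.card X * Fintype.card Y) → ℝ | ∀ z, 0 ≤ Q z}
        = ⋂ z, {Q | 0 ≤ Q z} := by ext Q; simp
    rw [this]
    exact isClosed_iInter fun z => isClosed_le continuous_const (continuous_apply z)
  · exact isClosed_eq (continuous_finset_sum _ fun z _ => continuous_apply z)
      continuous_const
  · by_cases hp : 0 < π (p.1, p.2)
    · have : {Q : X × Y × Fin (Fintype.card X * Fintype.card Y) → ℝ |
          0 < margXY Q p.1 p.2 → 0 < π (p.1, p.2)} = Set.univ := by
        ext Q; simp [hp]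
      rw [this]; exact isClosed_univ
    · have : {Q : X × Y × Fin (Fintype.card X * Fintype.card Y) → ℝ |
          0 < margXY Q p.1 p.2 → 0 < π (p.1, p.2)} = {Q | margXY Q p.1 p.2 ≤ 0} := by
        ext Q
        simp only [Set.mem_setOf_eq]
        constructor
        · intro h
          by_contra hc
          exact hp (h (lt_of_not_ge hc))
        · intro h h'
          exact absurd h' (not_lt.2 h)
      rw [this]
      exact isClosed_le (continuous_margXY_fn p.1 p.2) continuous_const

lemma isCompact_QClass : IsCompact (QClass π) := by
  refine IsCompact.of_isClosed_subset
    (isCompact_univ_pi (s := fun _ : X × Y × Fin (Fintype.card X * Fintype.card Y) =>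
      Set.Icc (0 : ℝ) 1) fun _ => isCompact_Icc)
    (isClosed_QClass π) ?_
  intro Q hQ
  obtain ⟨⟨h0, h1⟩, _⟩ := hQ
  intro z _
  refine ⟨h0 z, ?_⟩
  rw [← h1]
  exact Finset.single_le_sum (f := fun z => Q z) (fun z _ => h0 z) (Finset.mem_univ z)

end Aux8
section Aux9

open Finset Filter
open scoped Pointwise

variable {X Y : Type*} [Fintype X] [Fintype Y] (π : X × Y → ℝ)

/-- `inf_Q (λ A(Q) + B(Q))` over `QClass π`. -/
def gval (lam : ℝ) : ℝ :=
  sInf ((fun Q => lam * Afun π Q + Bfun π Q) '' QClass π)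

variable {π}

lemma Afun_eq {Q : X × Y × Fin (Fintype.card X * Fintype.card Y) → ℝ}
    (hQ : Q ∈ QClass π) :
    Afun π Q = klDiv (fun p : X × Y => margXY Q p.1 p.2) π + condKLind Q := by
  obtain ⟨⟨hQ0, _⟩, hsupp⟩ := hQ
  rw [Afun, klDiv_margXY_eq hQ0 hsupp, condKLind_eq hQ0]

lemma Bfun_eq {Q : X × Y × Fin (Fintype.card X * Fintype.card Y) → ℝ}
    (hQ : Q ∈ QClass π) : Bfun π Q = condKLpi π Q := by
  obtain ⟨⟨hQ0, _⟩, hsupp⟩ := hQ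
  rw [Bfun, condKLpi_eq hQ0 hsupp]

lemma Ralpha_eq_AB {Q : X × Y × Fin (Fintype.card X * Fintype.card Y) → ℝ}
    (hQ : Q ∈ QClass π) (α : ℝ) :
    Ralpha π α Q = (1 - α) * Afun π Q + α * Bfun π Q := by
  rw [Afun_eq hQ, Bfun_eq hQ, Ralpha]

lemma Afun_nonneg (hπ : IsPMF π)
    {Q : X × Y × Fin (Fintype.card X * Fintype.card Y) → ℝ} (hQ : Q ∈ QClass π) :
    0 ≤ Afun π Q := by
  obtain ⟨⟨hQ0, hQ1⟩, hsupp⟩ := hQ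
  rw [Afun_eq ⟨⟨hQ0, hQ1⟩, hsupp⟩]
  have h1 := klDiv_margXY_nonneg hπ hQ0 hQ1 hsupp
  have h2 := condKLind_nonneg hQ0 hQ1
  linarith

lemma Bfun_nonneg (hπ : IsPMF π)
    {Q : X × Y × Fin (Fintype.card X * Fintype.card Y) → ℝ} (hQ : Q ∈ QClass π) :
    0 ≤ Bfun π Q := by
  obtain ⟨⟨hQ0, hQ1⟩, hsupp⟩ := hQ
  rw [Bfun_eq ⟨⟨hQ0, hQ1⟩, hsupp⟩]
  exact condKLpi_nonneg hπ hQ0 hQ1 hsupp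

/-- The canonical equivalence `X × Y ≃ Fin (|X||Y|)`. -/
noncomputable def eXY (X Y : Type*) [Fintype X] [Fintype Y] :
    X × Y ≃ Fin (Fintype.card X * Fintype.card Y) :=
  (Fintype.equivFin (X × Y)).trans (finCongr (Fintype.card_prod X Y))

lemma diag_mem_QClass (hπ : IsPMF π) : diagCoupling π (eXY X Y) ∈ QClass π := by
  refine ⟨diagCoupling_isPMF (eXY X Y) hπ, fun x y h => ?_⟩
  rw [diagCoupling_margXY] at h
  exact h

lemma QClass_nonempty (hπ : IsPMF π) : (QClass π).Nonempty :=
  ⟨diagCoupling π (eXY X Y), diag_mem_QClass hπ⟩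

/-- The defining set of `CWyner`. -/
def WSet (π : X × Y → ℝ) : Set ℝ :=
  { r | ∃ P : X × Y × Fin (Fintype.card X * Fintype.card Y) → ℝ,
    IsPMF P ∧ (∀ x y, (∑ w, P (x, y, w)) = π (x, y)) ∧ IsMarkovXWY P ∧ r = mutualInfoW P }

lemma CWyner_eq : CWyner π = sInf (WSet π) := rfl

lemma WSet_nonempty (hπ : IsPMF π) : (WSet π).Nonempty := by
  refine ⟨mutualInfoW (diagCoupling π (eXY X Y)), diagCoupling π (eXY X Y),
    diagCoupling_isPMF _ hπ, ?_, diagCoupling_markov _, rfl⟩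
  intro x y
  exact diagCoupling_margXY (eXY X Y) x y

lemma WSet_bddBelow : BddBelow (WSet π) := by
  refine ⟨0, fun r hr => ?_⟩
  obtain ⟨P, hP, _, _, rfl⟩ := hr
  exact mutualInfoW_nonneg hP

lemma gval_bddBelow (hπ : IsPMF π) {lam : ℝ} (hlam : 0 ≤ lam) :
    BddBelow ((fun Q => lam * Afun π Q + Bfun π Q) '' QClass π) := by
  refine ⟨0, fun r hr => ?_⟩
  obtain ⟨Q, hQ, rfl⟩ := hr
  have := Afun_nonneg hπ hQ
  have := Bfun_nonneg hπ hQ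
  positivity

lemma gval_nonempty (hπ : IsPMF π) (lam : ℝ) :
    ((fun Q => lam * Afun π Q + Bfun π Q) '' QClass π).Nonempty :=
  (QClass_nonempty hπ).image _

lemma gval_mono (hπ : IsPMF π) {lam lam' : ℝ} (h0 : 0 ≤ lam) (h : lam ≤ lam') :
    gval π lam ≤ gval π lam' := by
  refine le_csInf (gval_nonempty hπ lam') ?_
  rintro r ⟨Q, hQ, rfl⟩
  calc gval π lam ≤ lam * Afun π Q + Bfun π Q :=
        csInf_le (gval_bddBelow hπ h0) ⟨Q, hQ, rfl⟩
    _ ≤ lam' * Afun π Q + Bfun π Q := by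
        have := Afun_nonneg hπ hQ
        nlinarith

lemma gval_le_CWyner (hπ : IsPMF π) {lam : ℝ} (hlam : 0 ≤ lam) :
    gval π lam ≤ CWyner π := by
  rw [CWyner_eq]
  refine le_csInf (WSet_nonempty hπ) ?_
  rintro r ⟨P, hP, hmarg, hm, rfl⟩
  have hPQ : P ∈ QClass π := by
    refine ⟨hP, fun x y h => ?_⟩
    have : margXY P x y = π (x, y) := hmarg x y
    rwa [this] at h
  have hA : Afun π P = 0 := by
    rw [Afun_eq hPQ, klDiv_zero_of_eq hmarg, condKLind_of_markov hP.1 hm, add_zero]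
  have hB : Bfun π P = mutualInfoW P := by
    rw [Bfun_eq hPQ, condKLpi_eq_mutualInfoW hmarg]
  calc gval π lam ≤ lam * Afun π P + Bfun π P :=
        csInf_le (gval_bddBelow hπ hlam) ⟨P, hPQ, rfl⟩
    _ = mutualInfoW P := by rw [hA, hB, mul_zero, zero_add]

lemma CWyner_le_Bfun (hπ : IsPMF π)
    {Q : X × Y × Fin (Fintype.card X * Fintype.card Y) → ℝ} (hQ : Q ∈ QClass π)
    (hA : Afun π Q = 0) : CWyner π ≤ Bfun π Q := by
  obtain ⟨⟨hQ0, hQ1⟩, hsupp⟩ := hQ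
  have hkl : klDiv (fun p : X × Y => margXY Q p.1 p.2) π = 0 := by
    have h1 := klDiv_margXY_nonneg hπ hQ0 hQ1 hsupp
    have h2 := condKLind_nonneg hQ0 hQ1
    rw [Afun_eq ⟨⟨hQ0, hQ1⟩, hsupp⟩] at hA
    linarith
  have hind : condKLind Q = 0 := by
    have h1 := klDiv_margXY_nonneg hπ hQ0 hQ1 hsupp
    have h2 := condKLind_nonneg hQ0 hQ1
    rw [Afun_eq ⟨⟨hQ0, hQ1⟩, hsupp⟩] at hA
    linarith
  have hmarg : ∀ x y, margXY Q x y = π (x, y) :=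
    klDiv_eq_zero_margXY hπ hQ0 hQ1 hsupp hkl
  have hm : IsMarkovXWY Q := condKLind_eq_zero_markov hQ0 hQ1 hind
  have hmem : mutualInfoW Q ∈ WSet π := ⟨Q, ⟨hQ0, hQ1⟩, hmarg, hm, rfl⟩
  rw [CWyner_eq, Bfun_eq ⟨⟨hQ0, hQ1⟩, hsupp⟩, condKLpi_eq_mutualInfoW hmarg]
  exact csInf_le WSet_bddBelow hmem

lemma inv_alpha_RalphaMin (hπ : IsPMF π) {α : ℝ} (hα : α ∈ Set.Ioc (0 : ℝ) 1) :
    (1 / α) * RalphaMin π α = gval π ((1 - α) / α) := by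
  obtain ⟨hα0, hα1⟩ := hα
  set lam := (1 - α) / α with hlam
  have hset : { r | ∃ Q ∈ QClass π, r = Ralpha π α Q }
      = (fun r => α * r) '' ((fun Q => lam * Afun π Q + Bfun π Q) '' QClass π) := by
    rw [← Set.image_comp]
    ext r
    simp only [Set.mem_setOf_eq, Set.mem_image, Function.comp]
    have key : ∀ Q : X × Y × Fin (Fintype.card X * Fintype.card Y) → ℝ,
        Q ∈ QClass π → α * (lam * Afun π Q + Bfun π Q) = Ralpha π α Q := by
      intro Q hQ
      rw [Ralpha_eq_AB hQ, hlam]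
      have hαne : α ≠ 0 := hα0.ne'
      field_simp
    constructor
    · rintro ⟨Q, hQ, rfl⟩
      exact ⟨Q, hQ, key Q hQ⟩
    · rintro ⟨Q, hQ, rfl⟩
      exact ⟨Q, hQ, key Q hQ⟩
  have hsmul : (fun r => α * r) '' ((fun Q => lam * Afun π Q + Bfun π Q) '' QClass π)
      = α • ((fun Q => lam * Afun π Q + Bfun π Q) '' QClass π) := by
    ext r
    simp [Set.mem_smul_set, smul_eq_mul]
  rw [RalphaMin, hset, hsmul, Real.sInf_smul_of_nonneg hα0.le, smul_eq_mul, gval]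
  field_simp

end Aux9
section Aux10

open Finset Filter

variable {X Y : Type*} [Fintype X] [Fintype Y] {π : X × Y → ℝ}

lemma tendsto_gval (hπ : IsPMF π) :
    Tendsto (fun k : ℕ => gval π ((k : ℝ) + 1)) atTop (nhds (CWyner π)) := by
  have hmono : Monotone fun k : ℕ => gval π ((k : ℝ) + 1) := by
    intro m n h
    refine gval_mono hπ (by positivity) ?_
    have : (m : ℝ) ≤ (n : ℝ) := Nat.cast_le.2 h
    linarith
  have hbdd : ∀ k : ℕ, gval π ((k : ℝ) + 1) ≤ CWyner π := fun k =>
    gval_le_CWyner hπ (by positivity)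
  have hBdd : BddAbove (Set.range fun k : ℕ => gval π ((k : ℝ) + 1)) := by
    refine ⟨CWyner π, ?_⟩
    rintro r ⟨k, rfl⟩
    exact hbdd k
  set L := ⨆ k : ℕ, gval π ((k : ℝ) + 1) with hLdef
  have hL : Tendsto (fun k : ℕ => gval π ((k : ℝ) + 1)) atTop (nhds L) :=
    tendsto_atTop_ciSup hmono hBdd
  have hLle : L ≤ CWyner π := ciSup_le hbdd
  have hexists : ∀ k : ℕ, ∃ Q, Q ∈ QClass π ∧
      ((k : ℝ) + 1) * Afun π Q + Bfun π Q < gval π ((k : ℝ) + 1) + 1 / ((k : ℝ) + 1) := by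
    intro k
    obtain ⟨r, hr, hlt⟩ := Real.lt_sInf_add_pos (gval_nonempty hπ ((k : ℝ) + 1))
      (show (0 : ℝ) < 1 / ((k : ℝ) + 1) by positivity)
    obtain ⟨Q, hQ, rfl⟩ := hr
    exact ⟨Q, hQ, hlt⟩
  choose Qs hQs hlt using hexists
  obtain ⟨Qstar, hQstar, φ, hφ, hconv⟩ := (isCompact_QClass π).tendsto_subseq hQs
  have hφtop : Tendsto (fun k : ℕ => ((φ k : ℝ) + 1)) atTop atTop :=
    tendsto_atTop_add_const_right _ 1 (tendsto_natCast_atTop_atTop.comp hφ.tendsto_atTop)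
  have hAconv : Tendsto (fun k => Afun π (Qs (φ k))) atTop (nhds (Afun π Qstar)) :=
    ((continuous_Afun π).tendsto Qstar).comp hconv
  have hBconv : Tendsto (fun k => Bfun π (Qs (φ k))) atTop (nhds (Bfun π Qstar)) :=
    ((continuous_Bfun π).tendsto Qstar).comp hconv
  have hAbound : ∀ k : ℕ, Afun π (Qs (φ k)) ≤ (CWyner π + 1) / ((φ k : ℝ) + 1) := by
    intro k
    have h1 := hlt (φ k)
    have h2 := hbdd (φ k)
    have h3 : (0 : ℝ) ≤ Bfun π (Qs (φ k)) := Bfun_nonneg hπ (hQs (φ k))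
    have h4 : 1 / ((φ k : ℝ) + 1) ≤ 1 := by
      rw [div_le_one (by positivity)]
      have : (0 : ℝ) ≤ (φ k : ℝ) := Nat.cast_nonneg _
      linarith
    have h5 : (0 : ℝ) < (φ k : ℝ) + 1 := by positivity
    have h6 : ((φ k : ℝ) + 1) * Afun π (Qs (φ k)) ≤ CWyner π + 1 := by linarith
    rw [le_div_iff₀ h5]
    calc Afun π (Qs (φ k)) * ((φ k : ℝ) + 1)
        = ((φ k : ℝ) + 1) * Afun π (Qs (φ k)) := mul_comm _ _
      _ ≤ CWyner π + 1 := h6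
  have hzero : Tendsto (fun k : ℕ => (CWyner π + 1) / ((φ k : ℝ) + 1)) atTop (nhds 0) :=
    Tendsto.div_atTop tendsto_const_nhds hφtop
  have hAstar : Afun π Qstar = 0 :=
    le_antisymm (by simpa using le_of_tendsto_of_tendsto' hAconv hzero hAbound)
      (Afun_nonneg hπ hQstar)
  have hBbound : ∀ k : ℕ, Bfun π (Qs (φ k)) ≤ L + 1 / ((φ k : ℝ) + 1) := by
    intro k
    have h1 := hlt (φ k)
    have h2 : gval π ((φ k : ℝ) + 1) ≤ L := le_ciSup hBdd (φ k)
    have h3 : (0 : ℝ) ≤ ((φ k : ℝ) + 1) * Afun π (Qs (φ k)) :=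
      mul_nonneg (by positivity) (Afun_nonneg hπ (hQs (φ k)))
    linarith
  have hLtend : Tendsto (fun k : ℕ => L + 1 / ((φ k : ℝ) + 1)) atTop (nhds L) := by
    have : Tendsto (fun k : ℕ => 1 / ((φ k : ℝ) + 1)) atTop (nhds 0) :=
      Tendsto.div_atTop tendsto_const_nhds hφtop
    simpa using tendsto_const_nhds.add this
  have hBL : Bfun π Qstar ≤ L := le_of_tendsto_of_tendsto' hBconv hLtend hBbound
  have hCW : CWyner π ≤ Bfun π Qstar := CWyner_le_Bfun hπ hQstar hAstar
  have hfinal : L = CWyner π := le_antisymm hLle (by linarith)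
  rwa [hfinal] at hL

end Aux10

open Filter in
/-- For every `α ∈ (0,1]`, `(1/α) R^{(α)} ≤ R*`; and there are a decreasing positive
sequence `α_k → 0` and a sequence `c(α_k) → 0` with `(1/α_k) R^{(α_k)} ≥ R* − c(α_k)`
for all `k`; in particular `(1/α_k) R^{(α_k)} → R*`.  Here `R* = C_Wyner(X;Y)` is the
minimum of `I(XY;U)` over couplings with `|U| ≤ |X||Y|`, `P_{XY} = π` and `X − U − Y`. -/
theorem Ralpha_bounds
    {X Y : Type*} [Fintype X] [Fintype Y] (π : X × Y → ℝ) (hπ : IsPMF π) :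
    (∀ α ∈ Set.Ioc (0 : ℝ) 1, (1 / α) * RalphaMin π α ≤ CWyner π) ∧
      ∃ a cseq : ℕ → ℝ, StrictAnti a ∧ (∀ k, a k ∈ Set.Ioc (0 : ℝ) 1) ∧
        Tendsto a atTop (nhds 0) ∧ Tendsto cseq atTop (nhds 0) ∧
        (∀ k, CWyner π - cseq k ≤ (1 / a k) * RalphaMin π (a k)) ∧
        Tendsto (fun k => (1 / a k) * RalphaMin π (a k)) atTop (nhds (CWyner π)) := by
  have hmemIoc : ∀ k : ℕ, 1 / ((k : ℝ) + 2) ∈ Set.Ioc (0 : ℝ) 1 := by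
    intro k
    constructor
    · positivity
    · rw [div_le_one (by positivity)]
      have : (0 : ℝ) ≤ (k : ℝ) := Nat.cast_nonneg _
      linarith
  have hvals : ∀ k : ℕ, (1 / (1 / ((k : ℝ) + 2))) * RalphaMin π (1 / ((k : ℝ) + 2))
      = gval π ((k : ℝ) + 1) := by
    intro k
    rw [inv_alpha_RalphaMin hπ (hmemIoc k)]
    congr 1
    have hk : (0 : ℝ) < (k : ℝ) + 2 := by positivity
    field_simp
    ring
  constructor
  · intro α hα
    rw [inv_alpha_RalphaMin hπ hα]
    obtain ⟨h0, h1⟩ := hα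
    exact gval_le_CWyner hπ (div_nonneg (by linarith) h0.le)
  · refine ⟨fun k => 1 / ((k : ℝ) + 2), fun k => CWyner π - gval π ((k : ℝ) + 1),
      ?_, hmemIoc, ?_, ?_, ?_, ?_⟩
    · intro m n h
      have h2 : ((m : ℝ) + 2) < ((n : ℝ) + 2) := by
        have : (m : ℝ) < (n : ℝ) := Nat.cast_lt.2 h
        linarith
      exact one_div_lt_one_div_of_lt (by positivity) h2
    · exact Tendsto.div_atTop tendsto_const_nhds
        (tendsto_atTop_add_const_right _ 2 tendsto_natCast_atTop_atTop)
    · have := tendsto_const_nhds (x := CWyner π) (f := atTop (α := ℕ)) |>.sub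
        (tendsto_gval hπ)
      simpa using this
    · intro k
      rw [hvals k]
      simp
    · have heq : (fun k : ℕ => (1 / (1 / ((k : ℝ) + 2))) *
          RalphaMin π (1 / ((k : ℝ) + 2))) = fun k : ℕ => gval π ((k : ℝ) + 1) :=
        funext hvals
      rw [heq]
      exact tendsto_gval hπ
end
end
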